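/- arXiv:2102.03225 — 2 statements merged into one kernel-verified Lean document; each statement's English description precedes it below -/
import Mathlib

section
/- For every integer n ≥ 1 and every integer k with 1 ≤ k ≤ n, the number of type-B permutation tableaux of size n whose k-th border step is a south step equals ((n-k+1)/(2n))·|B_n|; equivalently, for a uniformly random type-B permutation tableau of size n, the probability that the k-th step is a south step is (1/2)·(1-(k-1)/n). -/
/-- A type-B permutation tableau of size `n`, encoded via its border steps and filling.

Border steps are indexed by `Fin n` (index `i` is the `(i+1)`-th step from the
northeast corner); `west i = true` means the `(i+1)`-th step is a west step
(giving a column) and `west i = false` means it is a south step (giving a row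
of the original, unshifted diagram).

Rows of the shifted diagram are also indexed by `Fin n`: a south step `r` indexes
the corresponding original row, and a west step `r` indexes the inserted diagonal
row whose diagonal cell lies in the column of `r`.  The cell in row `r` and the
column of a west step `c` exists iff (`r` is south and `r < c`) or (`r` is west
and `r ≤ c`); in particular the diagonal cell of the column of `c` is `(c, c)`.
Columns are ordered left-to-right by decreasing step index, rows top-to-bottom as:
diagonal rows by decreasing step index, then original rows by increasing step index.

`filling r c = true` means the cell `(r, c)` contains a 1; `filling` is `false`
outside the cells of the diagram (field `support`).  The fields `col_one`,
`no_bad_zero` and `diag_zero` are the three defining conditions of a type-B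
permutation tableau. -/
structure TypeBTableau (n : ℕ) where
  west : Fin n → Bool
  filling : Fin n → Fin n → Bool
  support : ∀ r c : Fin n, filling r c = true →
    west c = true ∧ ((west r = false ∧ (r : ℕ) < (c : ℕ)) ∨ (west r = true ∧ (r : ℕ) ≤ (c : ℕ)))
  col_one : ∀ c : Fin n, west c = true → ∃ r : Fin n, filling r c = true
  no_bad_zero : ∀ r c : Fin n,
    (west c = true ∧ ((west r = false ∧ (r : ℕ) < (c : ℕ)) ∨ (west r = true ∧ (r : ℕ) ≤ (c : ℕ)))) →
    filling r c = false →
    ¬((∃ r' : Fin n,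
        ((west r' = true ∧ west r = false) ∨
         (west r' = true ∧ west r = true ∧ (r : ℕ) < (r' : ℕ)) ∨
         (west r' = false ∧ west r = false ∧ (r' : ℕ) < (r : ℕ))) ∧
        filling r' c = true) ∧
      (∃ c' : Fin n, (c : ℕ) < (c' : ℕ) ∧ filling r c' = true))
  diag_zero : ∀ j : Fin n, west j = true → filling j j = false →
    ∀ c : Fin n, filling j c = false

namespace TypeBTableau

noncomputable instance instFintype {n : ℕ} : Fintype (TypeBTableau n) :=
  Fintype.ofInjective (fun T => (T.west, T.filling)) (by
    rintro ⟨w1, f1, _, _, _, _⟩ ⟨w2, f2, _, _, _, _⟩ h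
    simp only [Prod.mk.injEq] at h
    obtain ⟨h1, h2⟩ := h
    subst h1; subst h2; rfl)

end TypeBTableau

open Finset

section Pure

/-- Key combinatorial sum: over nonempty subsets `B` of `insert τ S`, where `τ` is
strictly "above" (smaller key) than everything in `S`, sum of
`x ^ (B.card + #{a ∈ S | a strictly above all of B})`. -/
theorem key_sum {α : Type*} [DecidableEq α] (k : α → ℕ) (x : ℝ) :
    ∀ (S : Finset α) (τ : α), (∀ s ∈ S, k τ < k s) → (∀ a ∈ S, ∀ b ∈ S, k a = k b → a = b) →
    (∑ B ∈ (insert τ S).powerset,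
        (if B.Nonempty then x ^ (B.card + (S.filter (fun a => ∀ b ∈ B, k a < k b)).card) else 0))
      = 2 * x * (1 + x) ^ S.card - x ^ (S.card + 1) := by
  intro S
  induction S using Finset.strongInduction with
  | _ S ih =>
    intro τ hτ hinj
    rcases S.eq_empty_or_nonempty with rfl | hS
    · have : insert τ (∅ : Finset α) = {τ} := rfl
      rw [this, show ({τ} : Finset α).powerset = {∅, {τ}} from rfl,
        Finset.sum_pair (Ne.symm (Finset.singleton_ne_empty τ))]
      simp
      ring
    · -- pick M with maximal key
      obtain ⟨M, hM, hMmax⟩ := S.exists_max_image k hS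
      set S' := S.erase M with hS'
      have hMS' : M ∉ S' := Finset.notMem_erase _ _
      have hSins : S = insert M S' := by
        rw [hS', Finset.insert_erase hM]
      have hτM : k τ < k M := hτ M hM
      have hMne : M ≠ τ := fun h => by simp [h] at hτM
      have hMnotin : M ∉ insert τ S' := by
        simp only [Finset.mem_insert]
        rintro (rfl | h) <;> [exact hMne rfl; exact hMS' h]
      have hins : insert τ S = insert M (insert τ S') := by
        rw [hSins, Finset.insert_comm]
      have hS'sub : S' ⊂ S := Finset.erase_ssubset hM
      have hτ' : ∀ s ∈ S', k τ < k s := fun s hs => hτ s (Finset.mem_of_mem_erase hs)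
      have hinj' : ∀ a ∈ S', ∀ b ∈ S', k a = k b → a = b := fun a ha b hb h =>
        hinj a (Finset.mem_of_mem_erase ha) b (Finset.mem_of_mem_erase hb) h
      have hcard : S.card = S'.card + 1 := by
        rw [hSins, Finset.card_insert_of_notMem hMS']
      -- key strictness: elements of S' have key < k M
      have hkeylt : ∀ a ∈ S', k a < k M := by
        intro a ha
        have h1 : k a ≤ k M := hMmax a (Finset.mem_of_mem_erase ha)
        rcases lt_or_eq_of_le h1 with h | h
        · exact h
        · exact absurd (hinj a (Finset.mem_of_mem_erase ha) M hM h)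
            (Finset.ne_of_mem_erase ha)
      rw [hins, Finset.sum_powerset_insert hMnotin]
      -- First sum: B ⊆ insert τ S', M ∉ B
      have e1 : ∀ B ∈ (insert τ S').powerset,
          (if B.Nonempty then x ^ (B.card + (S.filter (fun a => ∀ b ∈ B, k a < k b)).card) else 0)
          = (if B.Nonempty then x ^ (B.card + (S'.filter (fun a => ∀ b ∈ B, k a < k b)).card) else 0) := by
        intro B hB
        rcases B.eq_empty_or_nonempty with rfl | hBne
        · simp
        · rw [if_pos hBne, if_pos hBne]
          congr 2
          rw [hSins, Finset.filter_insert]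
          rw [if_neg]
          intro hMcond
          obtain ⟨b, hb⟩ := hBne
          have hbmem : b ∈ insert τ S' := Finset.mem_powerset.mp hB hb
          have : k M < k b := hMcond b hb
          rcases Finset.mem_insert.mp hbmem with rfl | hbS'
          · omega
          · have := hkeylt b hbS'; omega
      rw [Finset.sum_congr rfl e1]
      rw [ih S' hS'sub τ hτ' hinj']
      -- Second sum: B = insert M B'
      have e2 : ∀ B' ∈ (insert τ S').powerset,
          (if (insert M B').Nonempty then
            x ^ ((insert M B').card + (S.filter (fun a => ∀ b ∈ insert M B', k a < k b)).card) else 0)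
          = x * (if B'.Nonempty then x ^ (B'.card + (S'.filter (fun a => ∀ b ∈ B', k a < k b)).card) else 0)
            + (if B' = ∅ then x ^ (S'.card + 1) else 0) := by
        intro B' hB'
        have hMB' : M ∉ B' := fun h => hMnotin (Finset.mem_powerset.mp hB' h)
        have hcardI : (insert M B').card = B'.card + 1 := Finset.card_insert_of_notMem hMB'
        have hfilt : S.filter (fun a => ∀ b ∈ insert M B', k a < k b)
            = S'.filter (fun a => ∀ b ∈ B', k a < k b) := by
          ext a
          simp only [Finset.mem_filter]
          constructor
          · rintro ⟨ha, hcond⟩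
            have hkaM : k a < k M := hcond M (Finset.mem_insert_self _ _)
            have haS : a ∈ insert M S' := hSins ▸ ha
            rcases Finset.mem_insert.mp haS with rfl | haS'
            · omega
            · exact ⟨haS', fun b hb => hcond b (Finset.mem_insert_of_mem hb)⟩
          · rintro ⟨ha, hcond⟩
            refine ⟨Finset.mem_of_mem_erase ha, fun b hb => ?_⟩
            rcases Finset.mem_insert.mp hb with rfl | hb
            · exact hkeylt a ha
            · exact hcond b hb
        rw [if_pos (Finset.insert_nonempty _ _), hcardI, hfilt]
        rcases B'.eq_empty_or_nonempty with rfl | hB'ne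
        · rw [if_neg (by simp), if_pos rfl,
            Finset.filter_true_of_mem (fun a _ b hb => absurd hb (Finset.notMem_empty b))]
          simp only [Finset.card_empty, mul_zero, zero_add]
          ring
        · rw [if_pos hB'ne, if_neg (Finset.nonempty_iff_ne_empty.mp hB'ne)]
          ring
      rw [Finset.sum_congr rfl e2, Finset.sum_add_distrib, ← Finset.mul_sum,
        ih S' hS'sub τ hτ' hinj']
      have hsingle : ∑ B' ∈ (insert τ S').powerset, (if B' = ∅ then x ^ (S'.card + 1) else 0)
          = x ^ (S'.card + 1) := by
        rw [Finset.sum_eq_single_of_mem ∅ (Finset.empty_mem_powerset _)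
          (fun b _ hb => if_neg hb)]
        exact if_pos rfl
      rw [hsingle, hcard]
      ring

end Pure
section Defs

variable {n : ℕ}

/-- `abv w r' r` : row `r'` is strictly above row `r` in the shifted diagram. -/
def abv (w : Fin n → Bool) (r' r : Fin n) : Prop :=
  (w r' = true ∧ w r = false) ∨ (w r' = true ∧ w r = true ∧ (r : ℕ) < (r' : ℕ)) ∨
    (w r' = false ∧ w r = false ∧ (r' : ℕ) < (r : ℕ))

instance (w : Fin n → Bool) (r' r : Fin n) : Decidable (abv w r' r) := by
  unfold abv; infer_instance

/-- numeric position of a row, counted from the top. -/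
def rpos (w : Fin n → Bool) (r : Fin n) : ℕ :=
  if w r then n - 1 - (r : ℕ) else n + (r : ℕ)

theorem abv_iff_rpos {w : Fin n → Bool} {r' r : Fin n} :
    abv w r' r ↔ rpos w r' < rpos w r := by
  have h1 : (r' : ℕ) < n := r'.isLt
  have h2 : (r : ℕ) < n := r.isLt
  unfold abv rpos
  cases hw' : w r' <;> cases hw : w r <;> simp <;> omega

theorem rpos_injective {w : Fin n → Bool} : Function.Injective (rpos w) := by
  intro a b hab
  have h1 : (a : ℕ) < n := a.isLt
  have h2 : (b : ℕ) < n := b.isLt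
  unfold rpos at hab
  have : (a : ℕ) = (b : ℕ) := by
    rcases Bool.eq_false_or_eq_true (w a) with ha | ha <;>
      rcases Bool.eq_false_or_eq_true (w b) with hb | hb <;>
        simp [ha, hb] at hab <;> omega
  exact Fin.ext this

theorem abv_irrefl {w : Fin n → Bool} (r : Fin n) : ¬ abv w r r := by
  rw [abv_iff_rpos]; omega

theorem abv_total {w : Fin n → Bool} {r' r : Fin n} (hne : r' ≠ r) :
    abv w r' r ∨ abv w r r' := by
  rw [abv_iff_rpos, abv_iff_rpos]
  rcases Nat.lt_trichotomy (rpos w r') (rpos w r) with h | h | h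
  · exact Or.inl h
  · exact absurd (rpos_injective h) hne
  · exact Or.inr h

/-- existence of a cell in row `r`, column `c`. -/
def cellEx (w : Fin n → Bool) (r c : Fin n) : Prop :=
  w c = true ∧ ((w r = false ∧ (r : ℕ) < (c : ℕ)) ∨ (w r = true ∧ (r : ℕ) ≤ (c : ℕ)))

instance (w : Fin n → Bool) (r c : Fin n) : Decidable (cellEx w r c) := by
  unfold cellEx; infer_instance

namespace TypeBTableau

/-- a row is restricted iff it contains a `0` cell with a `1` above it. -/
def restricted (T : TypeBTableau n) (r : Fin n) : Prop :=
  ∃ c, cellEx T.west r c ∧ T.filling r c = false ∧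
    ∃ r', abv T.west r' r ∧ T.filling r' c = true

instance (T : TypeBTableau n) (r : Fin n) : Decidable (T.restricted r) := by
  unfold restricted; infer_instance

/-- a row can receive a `1` in a newly added leftmost column. -/
def allowedP (T : TypeBTableau n) (r : Fin n) : Prop :=
  (T.west r = true → T.filling r r = true) ∧ ¬ T.restricted r

instance (T : TypeBTableau n) (r : Fin n) : Decidable (T.allowedP r) := by
  unfold allowedP; infer_instance

/-- the set of allowed rows. -/
def allowedF (T : TypeBTableau n) : Finset (Fin n) :=
  Finset.univ.filter T.allowedP

/-- the number of allowed rows. -/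
def uStat (T : TypeBTableau n) : ℕ := T.allowedF.card

theorem mem_allowedF {T : TypeBTableau n} {r : Fin n} :
    r ∈ T.allowedF ↔ T.allowedP r := by
  simp [allowedF]

theorem ext' {T₁ T₂ : TypeBTableau n} (hw : T₁.west = T₂.west)
    (hf : T₁.filling = T₂.filling) : T₁ = T₂ := by
  cases T₁; cases T₂; simp_all

end TypeBTableau

end Defs
section Ext

variable {n : ℕ}

namespace TypeBTableau

/-- delete the last border step. -/
def restrict (T' : TypeBTableau (n + 1)) : TypeBTableau n where
  west r := T'.west r.castSucc
  filling r c := T'.filling r.castSucc c.castSucc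
  support r c h := by simpa using T'.support r.castSucc c.castSucc h
  col_one c hc := by
    obtain ⟨r, hr⟩ := T'.col_one c.castSucc hc
    have hrlt : (r : ℕ) < n := by
      rcases T'.support _ _ hr with ⟨-, h | h⟩
      · have := h.2; simp at this; omega
      · have := h.2; simp at this; omega
    refine ⟨⟨r, hrlt⟩, ?_⟩
    have hcs : ((⟨(r : ℕ), hrlt⟩ : Fin n)).castSucc = r := by ext; simp
    show T'.filling ((⟨(r : ℕ), hrlt⟩ : Fin n)).castSucc c.castSucc = true
    rw [hcs]; exact hr
  no_bad_zero r c hcell h0 := by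
    intro hbad
    refine T'.no_bad_zero r.castSucc c.castSucc (by simpa using hcell) h0 ?_
    obtain ⟨⟨r', habv, h1⟩, c', hlt, h2⟩ := hbad
    exact ⟨⟨r'.castSucc, by simpa using habv, h1⟩, c'.castSucc, by simpa using hlt, h2⟩
  diag_zero j hj h0 c := T'.diag_zero j.castSucc hj h0 c.castSucc

@[simp] theorem restrict_west (T' : TypeBTableau (n + 1)) (r : Fin n) :
    (restrict T').west r = T'.west r.castSucc := rfl

@[simp] theorem restrict_filling (T' : TypeBTableau (n + 1)) (r c : Fin n) :
    (restrict T').filling r c = T'.filling r.castSucc c.castSucc := rfl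

/-- any filling in the last column forces the last step to be a west step. -/
theorem fill_last_col {T' : TypeBTableau (n + 1)} (h : T'.west (Fin.last n) = false)
    (r : Fin (n + 1)) : T'.filling r (Fin.last n) = false := by
  by_contra hne
  have ht : T'.filling r (Fin.last n) = true := by
    cases hv : T'.filling r (Fin.last n)
    · exact absurd hv hne
    · rfl
  exact absurd (T'.support _ _ ht).1 (by rw [h]; simp)

/-- the last row never meets an earlier column. -/
theorem fill_last_row (T' : TypeBTableau (n + 1)) (c : Fin n) :
    T'.filling (Fin.last n) c.castSucc = false := by
  by_contra hne
  have ht : T'.filling (Fin.last n) c.castSucc = true := by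
    cases hv : T'.filling (Fin.last n) c.castSucc
    · exact absurd hv hne
    · rfl
  rcases (T'.support _ _ ht).2 with h | h
  · have := h.2; simp at this; omega
  · have := h.2; simp at this; omega

/-- append a south step at the end. -/
def extSouth (T : TypeBTableau n) : TypeBTableau (n + 1) where
  west := Fin.lastCases false T.west
  filling r c :=
    Fin.lastCases false (fun r' => Fin.lastCases false (fun c' => T.filling r' c') c) r
  support r c h := by
    induction r using Fin.lastCases with
    | last => simp at h
    | cast r =>
      induction c using Fin.lastCases with
      | last => simp at h
      | cast c => simpa using T.support r c (by simpa using h)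
  col_one c hc := by
    induction c using Fin.lastCases with
    | last => simp at hc
    | cast c =>
      obtain ⟨r, hr⟩ := T.col_one c (by simpa using hc)
      exact ⟨r.castSucc, by simpa using hr⟩
  no_bad_zero r c hcell h0 := by
    intro hbad
    obtain ⟨⟨r', habv, h1⟩, c', hltc, h2⟩ := hbad
    induction c using Fin.lastCases with
    | last => exact absurd hcell.1 (by simp)
    | cast c =>
      induction r using Fin.lastCases with
      | last =>
        rcases hcell.2 with h | h
        · have := h.2; simp at this; omega
        · exact absurd h.1 (by simp)
      | cast r =>
        induction r' using Fin.lastCases with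
        | last => simp at h1
        | cast r' =>
          induction c' using Fin.lastCases with
          | last => simp at h2
          | cast c' =>
            refine T.no_bad_zero r c (by simpa using hcell) (by simpa using h0)
              ⟨⟨r', by simpa using habv, by simpa using h1⟩,
               c', by simpa using hltc, by simpa using h2⟩
  diag_zero j hj h0 c := by
    induction j using Fin.lastCases with
    | last => exact absurd hj (by simp)
    | cast j =>
      have hT := T.diag_zero j (by simpa using hj) (by simpa using h0)
      induction c using Fin.lastCases with
      | last => simp
      | cast c => simpa using hT c

@[simp] theorem extSouth_west_last (T : TypeBTableau n) :
    (extSouth T).west (Fin.last n) = false := by simp [extSouth]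

@[simp] theorem extSouth_west_castSucc (T : TypeBTableau n) (r : Fin n) :
    (extSouth T).west r.castSucc = T.west r := by simp [extSouth]

@[simp] theorem extSouth_filling_cast (T : TypeBTableau n) (r c : Fin n) :
    (extSouth T).filling r.castSucc c.castSucc = T.filling r c := by simp [extSouth]

@[simp] theorem extSouth_filling_last_col (T : TypeBTableau n) (r : Fin (n + 1)) :
    (extSouth T).filling r (Fin.last n) = false := by
  induction r using Fin.lastCases <;> simp [extSouth]

@[simp] theorem extSouth_filling_last_row (T : TypeBTableau n) (c : Fin (n + 1)) :
    (extSouth T).filling (Fin.last n) c = false := by simp [extSouth]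

/-- append a west step at the end, with `1`s of the new column at `B`. -/
def extWest (T : TypeBTableau n) (B : Finset (Fin (n + 1))) (hne : B.Nonempty)
    (hB : ∀ b : Fin n, b.castSucc ∈ B → T.allowedP b) : TypeBTableau (n + 1) where
  west := Fin.lastCases true T.west
  filling r c :=
    Fin.lastCases (motive := fun _ => Bool) (decide (r ∈ B))
      (fun c' => Fin.lastCases false (fun r' => T.filling r' c') r) c
  support r c h := by
    induction c using Fin.lastCases with
    | last =>
      refine ⟨by simp, ?_⟩
      induction r using Fin.lastCases with
      | last => right; simp
      | cast r =>
        cases hw : T.west r with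
        | false =>
          left
          constructor
          · simpa using hw
          · simp only [Fin.coe_castSucc, Fin.val_last]; exact r.isLt
        | true =>
          right
          constructor
          · simpa using hw
          · simp only [Fin.coe_castSucc, Fin.val_last]; exact le_of_lt r.isLt
    | cast c =>
      induction r using Fin.lastCases with
      | last => simp at h
      | cast r => simpa using T.support r c (by simpa using h)
  col_one c hc := by
    induction c using Fin.lastCases with
    | last =>
      obtain ⟨b, hb⟩ := hne
      exact ⟨b, by simpa using hb⟩
    | cast c =>
      obtain ⟨r, hr⟩ := T.col_one c (by simpa using hc)
      exact ⟨r.castSucc, by simpa using hr⟩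
  no_bad_zero r c hcell h0 := by
    intro hbad
    obtain ⟨⟨r', habv, h1⟩, c', hltc, h2⟩ := hbad
    induction c using Fin.lastCases with
    | last => have := c'.isLt; simp at hltc; omega
    | cast c =>
      induction r using Fin.lastCases with
      | last =>
        rcases hcell.2 with h | h
        · exact absurd h.1 (by simp)
        · have := h.2; simp at this; omega
      | cast r =>
        have h0' : T.filling r c = false := by simpa using h0
        induction r' using Fin.lastCases with
        | last => simp at h1
        | cast r' =>
          have habv' : abv T.west r' r := by
            rcases habv with h | h | h
            · exact Or.inl ⟨by simpa using h.1, by simpa using h.2⟩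
            · exact Or.inr (Or.inl ⟨by simpa using h.1, by simpa using h.2.1,
                by simpa using h.2.2⟩)
            · exact Or.inr (Or.inr ⟨by simpa using h.1, by simpa using h.2.1,
                by simpa using h.2.2⟩)
          have h1' : T.filling r' c = true := by simpa using h1
          have hcell' : cellEx T.west r c := by
            refine ⟨by simpa using hcell.1, ?_⟩
            rcases hcell.2 with h | h
            · exact Or.inl ⟨by simpa using h.1, by simpa using h.2⟩
            · exact Or.inr ⟨by simpa using h.1, by simpa using h.2⟩
          induction c' using Fin.lastCases with
          | last =>
            have hrB : r.castSucc ∈ B := by simpa using h2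
            exact (hB r hrB).2 ⟨c, hcell', h0', r', habv', h1'⟩
          | cast c' =>
            exact T.no_bad_zero r c hcell' h0'
              ⟨⟨r', habv', h1'⟩, c', by simpa using hltc, by simpa using h2⟩
  diag_zero j hj h0 c := by
    induction j using Fin.lastCases with
    | last =>
      induction c using Fin.lastCases with
      | last => exact h0
      | cast c => simp
    | cast j =>
      have hj' : T.west j = true := by simpa using hj
      have h0' : T.filling j j = false := by simpa using h0
      have hjB : j.castSucc ∉ B := by
        intro hmem
        exact absurd ((hB j hmem).1 hj') (by rw [h0']; simp)
      have hT := T.diag_zero j hj' h0'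
      induction c using Fin.lastCases with
      | last => simpa using hjB
      | cast c => simpa using hT c

@[simp] theorem extWest_west_last (T : TypeBTableau n) (B hne hB) :
    (extWest T B hne hB).west (Fin.last n) = true := by simp [extWest]

@[simp] theorem extWest_west_castSucc (T : TypeBTableau n) (B hne hB) (r : Fin n) :
    (extWest T B hne hB).west r.castSucc = T.west r := by simp [extWest]

@[simp] theorem extWest_filling_cast (T : TypeBTableau n) (B hne hB) (r c : Fin n) :
    (extWest T B hne hB).filling r.castSucc c.castSucc = T.filling r c := by simp [extWest]

@[simp] theorem extWest_filling_last_col (T : TypeBTableau n) (B hne hB) (r : Fin (n + 1)) :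
    (extWest T B hne hB).filling r (Fin.last n) = decide (r ∈ B) := by simp [extWest]

@[simp] theorem extWest_filling_last_row (T : TypeBTableau n) (B hne hB) (c : Fin n) :
    (extWest T B hne hB).filling (Fin.last n) c.castSucc = false := by simp [extWest]

end TypeBTableau

end Ext
section Classify

variable {n : ℕ}

namespace TypeBTableau

theorem restrict_extSouth (T : TypeBTableau n) : (extSouth T).restrict = T :=
  ext' (funext fun r => by simp) (funext fun r => funext fun c => by simp)

theorem restrict_extWest (T : TypeBTableau n) (B hne hB) :
    (extWest T B hne hB).restrict = T :=
  ext' (funext fun r => by simp) (funext fun r => funext fun c => by simp)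

theorem extSouth_restrict {T' : TypeBTableau (n + 1)}
    (h : T'.west (Fin.last n) = false) : extSouth T'.restrict = T' := by
  refine ext' (funext fun r => ?_) (funext fun r => funext fun c => ?_)
  · induction r using Fin.lastCases with
    | last => simp [h]
    | cast r => simp
  · induction c using Fin.lastCases with
    | last => simp [fill_last_col h r]
    | cast c =>
      induction r using Fin.lastCases with
      | last => simp [fill_last_row T' c]
      | cast r => simp

/-- the `1`s of the last column. -/
def colSet (T' : TypeBTableau (n + 1)) : Finset (Fin (n + 1)) :=
  Finset.univ.filter (fun r => T'.filling r (Fin.last n) = true)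

theorem mem_colSet {T' : TypeBTableau (n + 1)} {r : Fin (n + 1)} :
    r ∈ colSet T' ↔ T'.filling r (Fin.last n) = true := by simp [colSet]

theorem colSet_nonempty {T' : TypeBTableau (n + 1)} (h : T'.west (Fin.last n) = true) :
    (colSet T').Nonempty := by
  obtain ⟨r, hr⟩ := T'.col_one _ h
  exact ⟨r, mem_colSet.mpr hr⟩

theorem colSet_allowed {T' : TypeBTableau (n + 1)} :
    ∀ b : Fin n, b.castSucc ∈ colSet T' → T'.restrict.allowedP b := by
  intro b hb
  have hfb : T'.filling b.castSucc (Fin.last n) = true := mem_colSet.mp hb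
  constructor
  · intro hw
    by_contra hdiag
    have hdiag' : T'.filling b.castSucc b.castSucc = false := by
      simpa using hdiag
    have := T'.diag_zero b.castSucc (by simpa using hw) hdiag' (Fin.last n)
    rw [this] at hfb
    exact Bool.false_ne_true hfb
  · rintro ⟨c, hcell, h0, r', habv, h1⟩
    refine T'.no_bad_zero b.castSucc c.castSucc ?_ (by simpa using h0)
      ⟨⟨r'.castSucc, ?_, by simpa using h1⟩, Fin.last n, ?_, hfb⟩
    · obtain ⟨hc1, hc2⟩ := hcell
      refine ⟨by simpa using hc1, ?_⟩
      rcases hc2 with h | h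
      · exact Or.inl ⟨by simpa using h.1, by simpa using h.2⟩
      · exact Or.inr ⟨by simpa using h.1, by simpa using h.2⟩
    · rcases habv with h | h | h
      · exact Or.inl ⟨by simpa using h.1, by simpa using h.2⟩
      · exact Or.inr (Or.inl ⟨by simpa using h.1, by simpa using h.2.1, by simpa using h.2.2⟩)
      · exact Or.inr (Or.inr ⟨by simpa using h.1, by simpa using h.2.1, by simpa using h.2.2⟩)
    · simp only [Fin.coe_castSucc, Fin.val_last]
      exact c.isLt

theorem extWest_restrict {T' : TypeBTableau (n + 1)} (h : T'.west (Fin.last n) = true) :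
    extWest T'.restrict (colSet T') (colSet_nonempty h) colSet_allowed = T' := by
  refine ext' (funext fun r => ?_) (funext fun r => funext fun c => ?_)
  · induction r using Fin.lastCases with
    | last => simp [h]
    | cast r => simp
  · induction c using Fin.lastCases with
    | last =>
      rw [extWest_filling_last_col]
      cases hv : T'.filling r (Fin.last n)
      · simp [mem_colSet, hv]
      · simp [mem_colSet, hv]
    | cast c =>
      induction r using Fin.lastCases with
      | last => simp [fill_last_row T' c]
      | cast r => simp

end TypeBTableau

end Classify
section Allowed

variable {n : ℕ}

theorem abv_asymm {w : Fin n → Bool} {a b : Fin n} (h : abv w a b) : ¬ abv w b a := by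
  rw [abv_iff_rpos] at h ⊢; omega

namespace TypeBTableau

theorem abv_extSouth {T : TypeBTableau n} {a b : Fin n} :
    abv (extSouth T).west a.castSucc b.castSucc ↔ abv T.west a b := by
  unfold abv; simp

theorem abv_extWest {T : TypeBTableau n} {B hne hB} {a b : Fin n} :
    abv (extWest T B hne hB).west a.castSucc b.castSucc ↔ abv T.west a b := by
  unfold abv; simp

theorem cellEx_extSouth {T : TypeBTableau n} {a b : Fin n} :
    cellEx (extSouth T).west a.castSucc b.castSucc ↔ cellEx T.west a b := by
  unfold cellEx; simp

theorem cellEx_extWest {T : TypeBTableau n} {B hne hB} {a b : Fin n} :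
    cellEx (extWest T B hne hB).west a.castSucc b.castSucc ↔ cellEx T.west a b := by
  unfold cellEx; simp

theorem allowedP_extSouth_last (T : TypeBTableau n) :
    (extSouth T).allowedP (Fin.last n) := by
  constructor
  · intro h; exact absurd h (by simp)
  · rintro ⟨c, hcell, -⟩
    rcases hcell.2 with h | h
    · have h2 := h.2
      have := c.isLt
      simp only [Fin.val_last] at h2
      omega
    · exact absurd h.1 (by simp)

theorem restricted_extSouth_cast {T : TypeBTableau n} {r : Fin n} :
    (extSouth T).restricted r.castSucc ↔ T.restricted r := by
  constructor
  · rintro ⟨c, hcell, h0, r', habv, h1⟩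
    induction c using Fin.lastCases with
    | last => exact absurd hcell.1 (by simp)
    | cast c =>
      induction r' using Fin.lastCases with
      | last => rw [extSouth_filling_last_row] at h1; exact absurd h1 (by simp)
      | cast r' =>
        exact ⟨c, cellEx_extSouth.mp hcell, by simpa using h0, r',
          abv_extSouth.mp habv, by simpa using h1⟩
  · rintro ⟨c, hcell, h0, r', habv, h1⟩
    exact ⟨c.castSucc, cellEx_extSouth.mpr hcell, by simpa using h0, r'.castSucc,
      abv_extSouth.mpr habv, by simpa using h1⟩

theorem allowedP_extSouth_cast {T : TypeBTableau n} {r : Fin n} :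
    (extSouth T).allowedP r.castSucc ↔ T.allowedP r := by
  unfold allowedP
  rw [restricted_extSouth_cast]
  constructor
  · rintro ⟨h1, h2⟩
    exact ⟨fun hw => by simpa using h1 (by simpa using hw), h2⟩
  · rintro ⟨h1, h2⟩
    exact ⟨fun hw => by simpa using h1 (by simpa using hw), h2⟩

theorem allowedF_extSouth (T : TypeBTableau n) :
    (extSouth T).allowedF =
      insert (Fin.last n) (T.allowedF.map (Fin.castSuccEmb)) := by
  ext r
  rw [mem_allowedF]
  induction r using Fin.lastCases with
  | last => simp [allowedP_extSouth_last T]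
  | cast r =>
    have hne : r.castSucc ≠ Fin.last n := Fin.ne_last_of_lt (Fin.castSucc_lt_last r)
    simp only [Finset.mem_insert, Finset.mem_map, mem_allowedF]
    rw [allowedP_extSouth_cast]
    constructor
    · intro h
      exact Or.inr ⟨r, h, rfl⟩
    · rintro (h | ⟨a, ha, hae⟩)
      · exact absurd h hne
      · have : a = r := by
          have := Fin.castSucc_injective n (show a.castSucc = r.castSucc from hae)
          exact this
        rw [← this]; exact ha

theorem uStat_extSouth (T : TypeBTableau n) : (extSouth T).uStat = T.uStat + 1 := by
  unfold uStat
  rw [allowedF_extSouth, Finset.card_insert_of_notMem, Finset.card_map]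
  simp only [Finset.mem_map]
  rintro ⟨a, -, hae⟩
  exact absurd hae (Fin.ne_last_of_lt (Fin.castSucc_lt_last a))

theorem allowedP_extWest_last (T : TypeBTableau n) (B hne hB) :
    (extWest T B hne hB).allowedP (Fin.last n) ↔ Fin.last n ∈ B := by
  constructor
  · intro h
    have := h.1 (by simp)
    simpa using this
  · intro hmem
    constructor
    · intro _; simp [hmem]
    · rintro ⟨c, hcell, h0, -⟩
      have hc : c = Fin.last n := by
        rcases hcell.2 with h | h
        · exact absurd h.1 (by simp)
        · have h2 := h.2
          have := c.isLt
          simp only [Fin.val_last] at h2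
          refine Fin.ext ?_
          rw [Fin.val_last]
          omega
      rw [hc, extWest_filling_last_col] at h0
      simp [hmem] at h0

theorem allowedP_extWest_cast (T : TypeBTableau n) (B hne hB) (r : Fin n) :
    (extWest T B hne hB).allowedP r.castSucc ↔
      (T.allowedP r ∧ (r.castSucc ∈ B ∨
        ∀ b ∈ B, ¬ abv (extWest T B hne hB).west b r.castSucc)) := by
  constructor
  · rintro ⟨h1, h2⟩
    refine ⟨⟨fun hw => by simpa using h1 (by simpa using hw), ?_⟩, ?_⟩
    · rintro ⟨c, hcell, h0, r', habv, hone⟩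
      exact h2 ⟨c.castSucc, cellEx_extWest.mpr hcell, by simpa using h0,
        r'.castSucc, abv_extWest.mpr habv, by simpa using hone⟩
    · by_contra hcon
      push_neg at hcon
      obtain ⟨hnB, b, hbB, habv⟩ := hcon
      refine h2 ⟨Fin.last n, ⟨by simp, ?_⟩, ?_, b, habv, ?_⟩
      · cases hw : T.west r with
        | false =>
          left
          constructor
          · simpa using hw
          · simp only [Fin.coe_castSucc, Fin.val_last]; exact r.isLt
        | true =>
          right
          constructor
          · simpa using hw
          · simp only [Fin.coe_castSucc, Fin.val_last]; exact le_of_lt r.isLt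
      · rw [extWest_filling_last_col]; simpa using hnB
      · rw [extWest_filling_last_col]; simpa using hbB
  · rintro ⟨hallow, hdisj⟩
    constructor
    · intro hw
      have := hallow.1 (by simpa using hw)
      simpa using this
    · rintro ⟨c, hcell, h0, r', habv, hone⟩
      induction c using Fin.lastCases with
      | last =>
        rw [extWest_filling_last_col] at h0 hone
        have hrB : r.castSucc ∉ B := by simpa using h0
        have hr'B : r' ∈ B := by simpa using hone
        rcases hdisj with h | h
        · exact hrB h
        · exact h r' hr'B habv
      | cast c =>
        induction r' using Fin.lastCases with
        | last =>
          rw [extWest_filling_last_row] at hone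
          exact Bool.false_ne_true hone
        | cast r' =>
          exact hallow.2 ⟨c, cellEx_extWest.mp hcell, by simpa using h0,
            r', abv_extWest.mp habv, by simpa using hone⟩

theorem allowedF_extWest (T : TypeBTableau n) (B hne hB) :
    (extWest T B hne hB).allowedF =
      B ∪ (T.allowedF.map Fin.castSuccEmb).filter
        (fun a => ∀ b ∈ B, abv (extWest T B hne hB).west a b) := by
  ext r
  rw [mem_allowedF, Finset.mem_union, Finset.mem_filter]
  induction r using Fin.lastCases with
  | last =>
    rw [allowedP_extWest_last]
    constructor
    · exact fun h => Or.inl h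
    · rintro (h | ⟨hmem, -⟩)
      · exact h
      · simp only [Finset.mem_map] at hmem
        obtain ⟨a, -, hae⟩ := hmem
        exact absurd hae (Fin.ne_last_of_lt (Fin.castSucc_lt_last a))
  | cast r =>
    rw [allowedP_extWest_cast]
    simp only [Finset.mem_map, mem_allowedF]
    constructor
    · rintro ⟨hallow, hmem | habove⟩
      · exact Or.inl hmem
      · by_cases hrB : r.castSucc ∈ B
        · exact Or.inl hrB
        · refine Or.inr ⟨⟨r, hallow, rfl⟩, fun b hb => ?_⟩
          have hne' : r.castSucc ≠ b := fun h => hrB (h ▸ hb)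
          rcases abv_total (w := (extWest T B hne hB).west) hne' with h | h
          · exact h
          · exact absurd h (habove b hb)
    · rintro (hmem | ⟨⟨a, ha, hae⟩, habove⟩)
      · exact ⟨hB r hmem, Or.inl hmem⟩
      · have har : a = r := Fin.castSucc_injective n hae
        subst har
        exact ⟨ha, Or.inr fun b hb habv => abv_asymm habv (habove b hb)⟩

theorem uStat_extWest (T : TypeBTableau n) (B hne hB) :
    (extWest T B hne hB).uStat =
      B.card + ((T.allowedF.map Fin.castSuccEmb).filter
        (fun a => ∀ b ∈ B, abv (extWest T B hne hB).west a b)).card := by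
  unfold uStat
  rw [allowedF_extWest, Finset.card_union_of_disjoint]
  rw [Finset.disjoint_left]
  intro a haB hafilt
  rw [Finset.mem_filter] at hafilt
  exact abv_irrefl a (hafilt.2 a haB)

end TypeBTableau

end Allowed
section Equivs

variable {n : ℕ}

namespace TypeBTableau

/-- extension choices for a tableau: `none` = append a south step, `some B` =
append a west step with `1`s at `B`. -/
def ExtChoice (T : TypeBTableau n) : Type :=
  Option {B : Finset (Fin (n + 1)) //
    B.Nonempty ∧ ∀ b : Fin n, b.castSucc ∈ B → T.allowedP b}

instance (T : TypeBTableau n) : Fintype (ExtChoice T) := by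
  unfold ExtChoice; infer_instance

/-- realize an extension choice. -/
def toExt (T : TypeBTableau n) : ExtChoice T → TypeBTableau (n + 1)
  | none => extSouth T
  | some B => extWest T B.1 B.2.1 B.2.2

/-- extension choices are in bijection with the fiber of `restrict`. -/
def extEquiv (T : TypeBTableau n) :
    ExtChoice T ≃ {T' : TypeBTableau (n + 1) // T'.restrict = T} where
  toFun c := ⟨toExt T c, by
    cases c with
    | none => exact restrict_extSouth T
    | some B => exact restrict_extWest T B.1 B.2.1 B.2.2⟩
  invFun p :=
    if hw : p.1.west (Fin.last n) = true then
      some ⟨colSet p.1, (colSet_nonempty hw), by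
        intro b hb
        have := colSet_allowed b hb
        rwa [p.2] at this⟩
    else none
  left_inv c := by
    cases c with
    | none =>
      simp only [toExt]
      refine dif_neg ?_
      rw [extSouth_west_last]
      simp
    | some B =>
      simp only [toExt]
      refine (dif_pos (extWest_west_last T B.1 B.2.1 B.2.2)).trans ?_
      congr 1
      refine Subtype.ext ?_
      ext r
      rw [mem_colSet, extWest_filling_last_col]
      simp
  right_inv p := by
    obtain ⟨T', h⟩ := p
    subst h
    by_cases hw : T'.west (Fin.last n) = true
    · simp only [dif_pos hw]
      exact Subtype.ext ((congrArg T'.restrict.toExt (dif_pos hw)).trans (extWest_restrict hw))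
    · simp only [dif_neg hw]
      have hw' : T'.west (Fin.last n) = false := by
        cases hv : T'.west (Fin.last n)
        · rfl
        · exact absurd hv hw
      exact Subtype.ext ((congrArg T'.restrict.toExt (dif_neg hw)).trans (extSouth_restrict hw'))

theorem sum_ext (g : TypeBTableau (n + 1) → ℝ) :
    ∑ T' : TypeBTableau (n + 1), g T' =
      ∑ T : TypeBTableau n, ∑ c : ExtChoice T, g (toExt T c) := by
  classical
  rw [← Fintype.sum_fiberwise restrict g]
  refine Finset.sum_congr rfl fun T _ => ?_
  rw [← Equiv.sum_comp (extEquiv T) (fun x => g x.1)]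
  rfl

/-- the west function of any west extension. -/
def extw (T : TypeBTableau n) : Fin (n + 1) → Bool := Fin.lastCases true T.west

theorem extWest_west_eq (T : TypeBTableau n) (B hne hB) :
    (extWest T B hne hB).west = extw T := rfl

theorem valid_iff (T : TypeBTableau n) (B : Finset (Fin (n + 1))) :
    B ∈ ((insert (Fin.last n) (T.allowedF.map Fin.castSuccEmb)).powerset.filter
        (fun B => B.Nonempty)) ↔
      (B.Nonempty ∧ ∀ b : Fin n, b.castSucc ∈ B → T.allowedP b) := by
  simp only [Finset.mem_filter, Finset.mem_powerset]
  constructor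
  · rintro ⟨hsub, hne⟩
    refine ⟨hne, fun b hb => ?_⟩
    have hmem := hsub hb
    rcases Finset.mem_insert.mp hmem with h | h
    · exact absurd h (Fin.ne_last_of_lt (Fin.castSucc_lt_last b))
    · obtain ⟨a, ha, hae⟩ := Finset.mem_map.mp h
      have : a = b := Fin.castSucc_injective n hae
      subst this
      exact mem_allowedF.mp ha
  · rintro ⟨hne, hval⟩
    refine ⟨fun r hr => ?_, hne⟩
    induction r using Fin.lastCases with
    | last => exact Finset.mem_insert_self _ _
    | cast r =>
      exact Finset.mem_insert_of_mem
        (Finset.mem_map.mpr ⟨r, mem_allowedF.mpr (hval r hr), rfl⟩)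

theorem rpos_extw_last (T : TypeBTableau n) (s : Fin (n + 1))
    (hs : s ∈ T.allowedF.map Fin.castSuccEmb) :
    rpos (extw T) (Fin.last n) < rpos (extw T) s := by
  obtain ⟨a, -, rfl⟩ := Finset.mem_map.mp hs
  have h1 : rpos (extw T) (Fin.last n) = 0 := by
    unfold rpos extw
    simp
  rw [h1]
  have hc : ((Fin.castSuccEmb a : Fin (n + 1)) : ℕ) = (a : ℕ) := rfl
  have ha := a.isLt
  unfold rpos
  split <;> omega

set_option maxHeartbeats 1000000 in
/-- the main per-tableau computation : summing `x ^ uStat` over all extensions. -/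
theorem sum_choice (T : TypeBTableau n) (x : ℝ) :
    ∑ c : ExtChoice T, x ^ (toExt T c).uStat = 2 * x * (x + 1) ^ T.uStat := by
  rw [show (∑ c : ExtChoice T, x ^ (toExt T c).uStat) =
    x ^ (toExt T none).uStat + ∑ B : {B : Finset (Fin (n + 1)) //
      B.Nonempty ∧ ∀ b : Fin n, b.castSucc ∈ B → T.allowedP b},
      x ^ (toExt T (some B)).uStat from Fintype.sum_option _]
  have hsouth : (toExt T none).uStat = T.uStat + 1 := uStat_extSouth T
  have hwest : ∀ (B : {B : Finset (Fin (n + 1)) //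
      B.Nonempty ∧ ∀ b : Fin n, b.castSucc ∈ B → T.allowedP b}),
      x ^ (toExt T (some B)).uStat =
        x ^ (B.1.card + ((T.allowedF.map Fin.castSuccEmb).filter
          (fun a => ∀ b ∈ B.1, abv (extw T) a b)).card) := by
    intro B
    rw [show (toExt T (some B)) = extWest T B.1 B.2.1 B.2.2 from rfl,
      uStat_extWest, extWest_west_eq]
  rw [Finset.sum_congr rfl (fun B _ => hwest B)]
  have hsub : (∑ B : {B : Finset (Fin (n + 1)) //
      B.Nonempty ∧ ∀ b : Fin n, b.castSucc ∈ B → T.allowedP b},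
      x ^ ((B : Finset (Fin (n + 1))).card + ((T.allowedF.map Fin.castSuccEmb).filter
          (fun a => ∀ b ∈ (B : Finset (Fin (n + 1))), abv (extw T) a b)).card))
      = ∑ B ∈ ((insert (Fin.last n) (T.allowedF.map Fin.castSuccEmb)).powerset.filter
        (fun B => B.Nonempty)),
      x ^ (B.card + ((T.allowedF.map Fin.castSuccEmb).filter
          (fun a => ∀ b ∈ B, abv (extw T) a b)).card) :=
    (Finset.sum_subtype _ (valid_iff T)
      (fun B => x ^ (B.card + ((T.allowedF.map Fin.castSuccEmb).filter
        (fun a => ∀ b ∈ B, abv (extw T) a b)).card))).symm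
  have hfil := Finset.sum_filter
    (s := (insert (Fin.last n) (T.allowedF.map Fin.castSuccEmb)).powerset)
    (p := fun B => B.Nonempty)
    (f := fun B => x ^ (B.card + ((T.allowedF.map Fin.castSuccEmb).filter
          (fun a => ∀ b ∈ B, abv (extw T) a b)).card))
  rw [hsub, hfil]
  have hkey := key_sum (rpos (extw T)) x (T.allowedF.map Fin.castSuccEmb) (Fin.last n)
    (rpos_extw_last T) (fun a _ b _ h => rpos_injective h)
  have hcongr : ∀ B ∈ (insert (Fin.last n) (T.allowedF.map Fin.castSuccEmb)).powerset,
      (if B.Nonempty then x ^ (B.card + ((T.allowedF.map Fin.castSuccEmb).filter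
          (fun a => ∀ b ∈ B, abv (extw T) a b)).card) else 0) =
      (if B.Nonempty then x ^ (B.card + ((T.allowedF.map Fin.castSuccEmb).filter
          (fun a => ∀ b ∈ B, rpos (extw T) a < rpos (extw T) b)).card) else 0) := by
    intro B _
    have hfe : (T.allowedF.map Fin.castSuccEmb).filter
          (fun a => ∀ b ∈ B, abv (extw T) a b)
        = (T.allowedF.map Fin.castSuccEmb).filter
          (fun a => ∀ b ∈ B, rpos (extw T) a < rpos (extw T) b) := by
      refine Finset.filter_congr fun a _ => ?_
      constructor
      · intro h b hb; exact abv_iff_rpos.mp (h b hb)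
      · intro h b hb; exact abv_iff_rpos.mpr (h b hb)
    rw [hfe]
  rw [Finset.sum_congr rfl hcongr]
  have hkey' : (∑ B ∈ (insert (Fin.last n) (T.allowedF.map Fin.castSuccEmb)).powerset,
      (if B.Nonempty then x ^ (B.card + ((T.allowedF.map Fin.castSuccEmb).filter
          (fun a => ∀ b ∈ B, rpos (extw T) a < rpos (extw T) b)).card) else 0)) =
      2 * x * (1 + x) ^ T.uStat - x ^ (T.uStat + 1) := by
    rw [Finset.card_map] at hkey
    convert hkey <;> rfl
  rw [hkey', hsouth]
  unfold uStat
  ring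
end TypeBTableau

end Equivs
section GenFun

open TypeBTableau

instance : Unique (TypeBTableau 0) where
  default :=
    { west := fun i => i.elim0
      filling := fun i => i.elim0
      support := fun r => r.elim0
      col_one := fun c => c.elim0
      no_bad_zero := fun r => r.elim0
      diag_zero := fun j => j.elim0 }
  uniq T := ext' (funext fun i => i.elim0) (funext fun i => i.elim0)

noncomputable def Gfun (n : ℕ) (x : ℝ) : ℝ := ∑ T : TypeBTableau n, x ^ T.uStat

noncomputable def Hfun (n k : ℕ) (x : ℝ) : ℝ :=
  ∑ T : TypeBTableau n,
    if h : k < n then (if T.west ⟨k, h⟩ = false then x ^ T.uStat else 0) else 0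

theorem Gfun_zero (x : ℝ) : Gfun 0 x = 1 := by
  rw [Gfun, Fintype.sum_unique]
  have h : (default : TypeBTableau 0).uStat = 0 := by
    have : (default : TypeBTableau 0).allowedF = (∅ : Finset (Fin 0)) :=
      Finset.eq_empty_of_forall_notMem (fun r => r.elim0)
    rw [uStat, this, Finset.card_empty]
  rw [h, pow_zero]

theorem Gfun_succ (n : ℕ) (x : ℝ) : Gfun (n + 1) x = 2 * x * Gfun n (x + 1) := by
  rw [Gfun, sum_ext (fun T' => x ^ T'.uStat),
    Finset.sum_congr rfl (fun T _ => sum_choice T x), Gfun, Finset.mul_sum]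

theorem Hfun_succ (n k : ℕ) (hk : k < n) (x : ℝ) :
    Hfun (n + 1) k x = 2 * x * Hfun n k (x + 1) := by
  have hk1 : k < n + 1 := Nat.lt_succ_of_lt hk
  have hwestc : ∀ (T : TypeBTableau n) (c : ExtChoice T),
      (toExt T c).west ⟨k, hk1⟩ = T.west ⟨k, hk⟩ := by
    intro T c
    have hcs : (⟨k, hk1⟩ : Fin (n + 1)) = (⟨k, hk⟩ : Fin n).castSucc := by
      refine Fin.ext ?_; simp
    rw [hcs]
    cases c with
    | none => exact extSouth_west_castSucc T _
    | some B => exact extWest_west_castSucc T B.1 B.2.1 B.2.2 _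
  rw [Hfun, sum_ext (fun T' =>
      if h : k < n + 1 then (if T'.west ⟨k, h⟩ = false then x ^ T'.uStat else 0) else 0),
    Hfun, Finset.mul_sum]
  refine Finset.sum_congr rfl fun T _ => ?_
  rw [dif_pos hk]
  simp only [dif_pos hk1, hwestc]
  by_cases hw : T.west ⟨k, hk⟩ = false
  · simp only [hw, if_pos]
    exact sum_choice T x
  · simp only [if_neg hw, Finset.sum_const_zero, mul_zero]

theorem Hfun_last (n : ℕ) (x : ℝ) : Hfun (n + 1) n x = x * Gfun n x := by
  have hn1 : n < n + 1 := Nat.lt_succ_self n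
  have hlast : (⟨n, hn1⟩ : Fin (n + 1)) = Fin.last n := rfl
  rw [Hfun, sum_ext (fun T' =>
      if h : n < n + 1 then (if T'.west ⟨n, h⟩ = false then x ^ T'.uStat else 0) else 0),
    Gfun, Finset.mul_sum]
  refine Finset.sum_congr rfl fun T _ => ?_
  simp only [dif_pos hn1, hlast]
  rw [show (∑ c : ExtChoice T,
      (if (toExt T c).west (Fin.last n) = false then x ^ (toExt T c).uStat else 0)) =
    (if (toExt T none).west (Fin.last n) = false then x ^ (toExt T none).uStat else 0)
      + ∑ B : {B : Finset (Fin (n + 1)) //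
          B.Nonempty ∧ ∀ b : Fin n, b.castSucc ∈ B → T.allowedP b},
        (if (toExt T (some B)).west (Fin.last n) = false
          then x ^ (toExt T (some B)).uStat else 0) from Fintype.sum_option _]
  have h1 : (toExt T none).west (Fin.last n) = false := extSouth_west_last T
  have h2 : ∀ (B : {B : Finset (Fin (n + 1)) //
      B.Nonempty ∧ ∀ b : Fin n, b.castSucc ∈ B → T.allowedP b}),
      (if (toExt T (some B)).west (Fin.last n) = false
        then x ^ (toExt T (some B)).uStat else 0) = 0 := by
    intro B
    rw [if_neg]
    rw [show (toExt T (some B)) = extWest T B.1 B.2.1 B.2.2 from rfl,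
      extWest_west_last]
    simp
  rw [Finset.sum_congr rfl (fun B _ => h2 B), Finset.sum_const_zero, add_zero,
    if_pos h1, show (toExt T none) = extSouth T from rfl, uStat_extSouth]
  rw [pow_succ]
  ring

theorem Gfun_closed (n : ℕ) (x : ℝ) :
    Gfun n x = 2 ^ n * ∏ i ∈ Finset.range n, (x + i) := by
  induction n generalizing x with
  | zero => simp [Gfun_zero]
  | succ m ih =>
    rw [Gfun_succ, ih (x + 1), Finset.prod_range_succ' (fun i => x + (i : ℝ)) m]
    have hp : ∏ i ∈ Finset.range m, (x + 1 + (i : ℝ))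
        = ∏ i ∈ Finset.range m, (x + ((i + 1 : ℕ) : ℝ)) :=
      Finset.prod_congr rfl (fun i _ => by push_cast; ring)
    rw [hp]
    push_cast
    ring

theorem Hfun_closed : ∀ (n k : ℕ), k < n → ∀ x : ℝ,
    Hfun n k x = 2 ^ (n - 1) * (∏ j ∈ Finset.range (n - 1 - k), (x + j))
      * (x + (n - 1 - k : ℕ)) * ∏ i ∈ Finset.range k, (x + (n - 1 - k : ℕ) + i) := by
  intro n
  induction n with
  | zero => intro k hk; omega
  | succ m ih =>
    intro k hk x
    rcases Nat.lt_succ_iff_lt_or_eq.mp hk with hkm | hke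
    · -- k < m
      have hd : m + 1 - 1 - k = (m - 1 - k) + 1 := by omega
      have hm : m - 1 + 1 = m := by omega
      rw [Hfun_succ m k hkm, ih k hkm (x + 1), hd]
      rw [Finset.prod_range_succ' (fun j => x + (j : ℝ)) (m - 1 - k)]
      have hp1 : ∏ j ∈ Finset.range (m - 1 - k), (x + 1 + (j : ℝ))
          = ∏ j ∈ Finset.range (m - 1 - k), (x + ((j + 1 : ℕ) : ℝ)) :=
        Finset.prod_congr rfl (fun j _ => by push_cast; ring)
      have hp2 : ∏ i ∈ Finset.range k, (x + 1 + ((m - 1 - k : ℕ) : ℝ) + i)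
          = ∏ i ∈ Finset.range k, (x + ((m - 1 - k + 1 : ℕ) : ℝ) + i) :=
        Finset.prod_congr rfl (fun i _ => by push_cast; ring)
      rw [hp1, hp2]
      have h2 : (2 : ℝ) ^ m = 2 * 2 ^ (m - 1) := by
        rw [← pow_succ']
        congr 1
        omega
      rw [show m + 1 - 1 = m from rfl, h2]
      push_cast
      ring
    · -- k = m
      subst hke
      have hd : k + 1 - 1 - k = 0 := by omega
      rw [Hfun_last k x, Gfun_closed k x, hd]
      simp only [Finset.range_zero, Finset.prod_empty, Nat.cast_zero, add_zero, one_mul]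
      rw [show k + 1 - 1 = k from rfl]
      ring

end GenFun
section Final

open TypeBTableau

theorem prod_one_add (m : ℕ) :
    ∏ i ∈ Finset.range m, ((1 : ℝ) + i) = (Nat.factorial m : ℝ) := by
  induction m with
  | zero => simp
  | succ t ih =>
    rw [Finset.prod_range_succ, ih, Nat.factorial_succ]
    push_cast
    ring

theorem prod_shift (s t : ℕ) :
    (Nat.factorial s : ℝ) * ∏ i ∈ Finset.range t, ((s : ℝ) + 1 + i)
      = (Nat.factorial (s + t) : ℝ) := by
  induction t with
  | zero => simp
  | succ t ih =>
    rw [Finset.prod_range_succ, show s + (t + 1) = (s + t) + 1 from rfl,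
      Nat.factorial_succ]
    push_cast
    linear_combination ((s : ℝ) + 1 + (t : ℝ)) * ih

theorem expected_south_step' (n k : ℕ) (hn : 1 ≤ n) (hk : 1 ≤ k) (hkn : k ≤ n) :
    ((Finset.univ.filter (fun T : TypeBTableau n =>
        T.west ⟨k - 1, Nat.lt_of_lt_of_le (Nat.sub_lt hk Nat.one_pos) hkn⟩ = false)).card : ℝ) =
      ((n : ℝ) - (k : ℝ) + 1) / (2 * (n : ℝ)) * (Fintype.card (TypeBTableau n) : ℝ) := by
  have hk1n : k - 1 < n := by omega
  have hm : n - 1 - (k - 1) = n - k := by omega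
  have hH := Hfun_closed n (k - 1) hk1n 1
  rw [hm] at hH
  have hG := Gfun_closed n 1
  have hGcard : Gfun n 1 = (Fintype.card (TypeBTableau n) : ℝ) := by
    rw [Gfun]
    simp
  have hHcard : Hfun n (k - 1) 1 =
      ((Finset.univ.filter (fun T : TypeBTableau n =>
        T.west ⟨k - 1, by omega⟩ = false)).card : ℝ) := by
    rw [Finset.card_filter, Hfun]
    push_cast
    refine Finset.sum_congr rfl fun T _ => ?_
    rw [dif_pos hk1n]
    by_cases hw : T.west ⟨k - 1, hk1n⟩ = false
    · rw [if_pos hw, if_pos hw, one_pow]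
    · rw [if_neg hw, if_neg hw]
  have hfac1 : ∏ j ∈ Finset.range (n - k), ((1 : ℝ) + j) = ((n - k).factorial : ℝ) :=
    prod_one_add _
  have hfac2 : ((n - k).factorial : ℝ)
      * ∏ i ∈ Finset.range (k - 1), (((n - k : ℕ) : ℝ) + 1 + i)
      = ((n - 1).factorial : ℝ) := by
    have h := prod_shift (n - k) (k - 1)
    rwa [show n - k + (k - 1) = n - 1 by omega] at h
  have hfac3 : ∏ i ∈ Finset.range n, ((1 : ℝ) + i) = (n.factorial : ℝ) :=
    prod_one_add _
  have hre : ∏ i ∈ Finset.range (k - 1), ((1 : ℝ) + ((n - k : ℕ) : ℝ) + i)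
      = ∏ i ∈ Finset.range (k - 1), (((n - k : ℕ) : ℝ) + 1 + i) :=
    Finset.prod_congr rfl (fun i _ => by ring)
  rw [hre, hfac1] at hH
  rw [hfac3] at hG
  have hcast : ((n - k : ℕ) : ℝ) = (n : ℝ) - k := by
    push_cast [Nat.cast_sub hkn]
    ring
  rw [hcast] at hH hfac2
  rw [← hHcard, hH, ← hGcard, hG]
  have hnf : (n.factorial : ℝ) = n * ((n - 1).factorial : ℝ) := by
    obtain ⟨m, rfl⟩ : ∃ m, n = m + 1 := ⟨n - 1, by omega⟩
    rw [Nat.factorial_succ]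
    push_cast
    ring
  have h2n : (2 : ℝ) ^ n = 2 * 2 ^ (n - 1) := by
    rw [← pow_succ']
    congr 1
    omega
  have hn0 : (n : ℝ) ≠ 0 := Nat.cast_ne_zero.mpr (by omega)
  rw [hnf, h2n]
  field_simp
  rw [← hfac2]
  ring

end Final

/-- The number of type-B permutation tableaux of size `n` whose `k`-th border step
is a south step equals `((n - k + 1) / (2n)) · |B_n|`; i.e. the probability that
the `k`-th step of a uniformly random type-B permutation tableau of size `n` is a
south step is `(1/2)(1 - (k-1)/n)`. -/
theorem expected_south_step (n k : ℕ) (hn : 1 ≤ n) (hk : 1 ≤ k) (hkn : k ≤ n) :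
    ((Finset.univ.filter (fun T : TypeBTableau n =>
        T.west ⟨k - 1, by omega⟩ = false)).card : ℝ) =
      ((n : ℝ) - (k : ℝ) + 1) / (2 * (n : ℝ)) * (Fintype.card (TypeBTableau n) : ℝ) :=
  expected_south_step' n k hn hk hkn
end

section
/- For every integer n ≥ 1, the sum over all type-B permutation tableaux T of size n of the number of diagonal cells of T that contain a 1 equals (n/2)·|B_n|; equivalently, the expected number of ones on the diagonal of a uniformly random type-B permutation tableau of size n is n/2. -/
open Finset

/-- The number of diagonal cells of a type-B permutation tableau containing a 1:
the diagonal cell of the column of a west step `j` is the cell `(j, j)`. -/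
def TypeBTableau.numDiagOnes {n : ℕ} (T : TypeBTableau n) : ℕ :=
  (Finset.univ.filter (fun j : Fin n => T.west j = true ∧ T.filling j j = true)).card

section Aux

open Finset
open scoped Classical

namespace TB

abbrev B (n : ℕ) := TypeBTableau n

variable {n m : ℕ}

/-- `r'` is strictly above `r` in the row order of the shifted diagram. -/
def above (T : B n) (r' r : Fin n) : Prop :=
  (T.west r' = true ∧ T.west r = false) ∨
  (T.west r' = true ∧ T.west r = true ∧ (r : ℕ) < (r' : ℕ)) ∨
  (T.west r' = false ∧ T.west r = false ∧ (r' : ℕ) < (r : ℕ))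

def cellEx (T : B n) (r c : Fin n) : Prop :=
  T.west c = true ∧ ((T.west r = false ∧ (r : ℕ) < (c : ℕ)) ∨ (T.west r = true ∧ (r : ℕ) ≤ (c : ℕ)))

/-- numeric key realizing the row order: smaller key = higher row. -/
def key (T : B n) (r : Fin n) : ℕ := if T.west r then n - 1 - (r : ℕ) else n + (r : ℕ)

lemma above_iff (T : B n) (r' r : Fin n) : above T r' r ↔ key T r' < key T r := by
  have h1 := r.isLt; have h2 := r'.isLt
  unfold above key
  rcases hw' : T.west r' <;> rcases hw : T.west r <;> simp <;> omega

lemma key_inj (T : B n) {r r' : Fin n} (h : key T r = key T r') : r = r' := by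
  have h1 := r.isLt; have h2 := r'.isLt
  unfold key at h
  apply Fin.ext
  rcases hw : T.west r <;> rcases hw' : T.west r' <;> rw [hw, hw'] at h <;> simp at h <;> omega

def allowed (T : B n) (r : Fin n) : Prop :=
  (¬ ∃ c, cellEx T r c ∧ T.filling r c = false ∧ ∃ r', above T r' r ∧ T.filling r' c = true) ∧
  ¬ (T.west r = true ∧ T.filling r r = false)

noncomputable def aSet (T : B n) : Finset (Fin n) := univ.filter (allowed T)

noncomputable def aS (T : B n) : ℕ := (aSet T).card

lemma mem_aSet {T : B n} {r : Fin n} : r ∈ aSet T ↔ allowed T r := by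
  simp [aSet]

lemma tbext {T₁ T₂ : B n} (h1 : T₁.west = T₂.west) (h2 : T₁.filling = T₂.filling) : T₁ = T₂ := by
  cases T₁; cases T₂; simp_all

/-- not in support implies filling false -/
lemma fill_false (T : B n) (r c : Fin n) (h : ¬ cellEx T r c) : T.filling r c = false := by
  rcases hf : T.filling r c
  · rfl
  · exact absurd (T.support r c hf) h

/-! ### Deletion of the last step -/

def del (T : B (m+1)) : B m where
  west r := T.west r.castSucc
  filling r c := T.filling r.castSucc c.castSucc
  support r c h := by have := T.support _ _ h; simpa using this
  col_one c hc := by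
    obtain ⟨r, hr⟩ := T.col_one c.castSucc hc
    have hrm : (r : ℕ) < m := by
      by_contra hcon
      have h2 := T.support _ _ hr
      have := r.isLt
      have := c.isLt
      simp only [Fin.coe_castSucc] at h2
      omega
    have : r = (⟨(r : ℕ), hrm⟩ : Fin m).castSucc := by
      apply Fin.ext; simp
    exact ⟨⟨(r : ℕ), hrm⟩, by show T.filling _ _ = true; rw [← this]; exact hr⟩
  no_bad_zero r c hcell hf hbad := by
    apply T.no_bad_zero r.castSucc c.castSucc (by simpa using hcell) hf
    obtain ⟨⟨r', hr1, hr2⟩, ⟨c', hc1, hc2⟩⟩ := hbad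
    exact ⟨⟨r'.castSucc, by simpa using hr1, hr2⟩, ⟨c'.castSucc, by simpa using hc1, hc2⟩⟩
  diag_zero j hj hjj c := T.diag_zero j.castSucc hj hjj c.castSucc

@[simp] lemma del_west (T : B (m+1)) (r : Fin m) : (del T).west r = T.west r.castSucc := rfl
@[simp] lemma del_fill (T : B (m+1)) (r c : Fin m) :
    (del T).filling r c = T.filling r.castSucc c.castSucc := rfl

lemma above_del (T : B (m+1)) (r' r : Fin m) :
    above (del T) r' r ↔ above T r'.castSucc r.castSucc := by
  simp [above]

lemma cellEx_del (T : B (m+1)) (r c : Fin m) :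
    cellEx (del T) r c ↔ cellEx T r.castSucc c.castSucc := by
  simp [cellEx]

end TB

end Aux
namespace TB
open Finset
open scoped Classical
variable {n m : ℕ}

/-! ### Extension by a new last step -/

def ew (T' : B m) (bw : Bool) : Fin (m+1) → Bool :=
  fun r => if h : (r : ℕ) < m then T'.west ⟨r, h⟩ else bw

def ef (T' : B m) (F : Finset (Fin m)) (b : Bool) : Fin (m+1) → Fin (m+1) → Bool :=
  fun r c =>
    if hr : (r : ℕ) < m then
      (if hc : (c : ℕ) < m then T'.filling ⟨r, hr⟩ ⟨c, hc⟩ else decide (⟨r, hr⟩ ∈ F))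
    else (if (c : ℕ) < m then false else b)

@[simp] lemma ew_cs (T' : B m) (bw : Bool) (r : Fin m) : ew T' bw r.castSucc = T'.west r := by
  simp [ew, r.isLt]
@[simp] lemma ew_last (T' : B m) (bw : Bool) : ew T' bw (Fin.last m) = bw := by
  simp [ew]
@[simp] lemma ef_cc (T' : B m) (F : Finset (Fin m)) (b : Bool) (r c : Fin m) :
    ef T' F b r.castSucc c.castSucc = T'.filling r c := by
  simp [ef, r.isLt, c.isLt]
@[simp] lemma ef_cl (T' : B m) (F : Finset (Fin m)) (b : Bool) (r : Fin m) :
    ef T' F b r.castSucc (Fin.last m) = decide (r ∈ F) := by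
  simp [ef, r.isLt]
@[simp] lemma ef_lc (T' : B m) (F : Finset (Fin m)) (b : Bool) (c : Fin m) :
    ef T' F b (Fin.last m) c.castSucc = false := by
  simp [ef, c.isLt]
@[simp] lemma ef_ll (T' : B m) (F : Finset (Fin m)) (b : Bool) :
    ef T' F b (Fin.last m) (Fin.last m) = b := by
  simp [ef]

lemma finsplit (r : Fin (m+1)) : (∃ r₀ : Fin m, r = r₀.castSucc) ∨ r = Fin.last m := by
  rcases Nat.lt_or_ge (r : ℕ) m with h | h
  · exact Or.inl ⟨⟨r, h⟩, by apply Fin.ext; simp⟩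
  · exact Or.inr (by apply Fin.ext; have := r.isLt; simp; omega)

def glueW (T' : B m) (b : Bool) (F : Finset (Fin m)) (hF : ∀ r ∈ F, allowed T' r)
    (hne : b = true ∨ F.Nonempty) : B (m+1) where
  west := ew T' true
  filling := ef T' F b
  support := by
    intro r c h
    rcases finsplit r with ⟨r₀, rfl⟩ | rfl <;> rcases finsplit c with ⟨c₀, rfl⟩ | rfl
    · simp only [ef_cc] at h
      have := T'.support _ _ h
      simpa using this
    · simp only [ef_cl, decide_eq_true_eq] at h
      refine ⟨by simp, ?_⟩
      rcases Bool.eq_false_or_eq_true (T'.west r₀) with hw | hw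
      · exact Or.inr ⟨by simpa using hw, by simpa using le_of_lt r₀.isLt⟩
      · exact Or.inl ⟨by simpa using hw, by simpa using r₀.isLt⟩
    · simp at h
    · simp only [ef_ll] at h
      exact ⟨by simp, Or.inr ⟨by simp, le_refl _⟩⟩
  col_one := by
    intro c hc
    rcases finsplit c with ⟨c₀, rfl⟩ | rfl
    · simp only [ew_cs] at hc
      obtain ⟨r₀, hr⟩ := T'.col_one c₀ hc
      exact ⟨r₀.castSucc, by simpa using hr⟩
    · rcases hne with hb | ⟨r₀, hr⟩
      · exact ⟨Fin.last m, by simp [hb]⟩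
      · exact ⟨r₀.castSucc, by simpa using hr⟩
  diag_zero := by
    intro j hj hjj c
    rcases finsplit j with ⟨j₀, rfl⟩ | rfl
    · simp only [ew_cs] at hj
      simp only [ef_cc] at hjj
      have hnF : j₀ ∉ F := by
        intro hmem
        exact (hF j₀ hmem).2 ⟨hj, hjj⟩
      rcases finsplit c with ⟨c₀, rfl⟩ | rfl
      · simp only [ef_cc]
        exact T'.diag_zero j₀ hj hjj c₀
      · simpa using hnF
    · simp only [ef_ll] at hjj
      rcases finsplit c with ⟨c₀, rfl⟩ | rfl
      · simp
      · simpa using hjj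
  no_bad_zero := by
    intro r c hcell hf hbad
    obtain ⟨⟨r', hrel, hr'f⟩, ⟨c', hlt, hc'f⟩⟩ := hbad
    rcases finsplit r with ⟨r₀, rfl⟩ | rfl
    · rcases finsplit c with ⟨c₀, rfl⟩ | rfl
      · -- old cell
        simp only [ef_cc] at hf
        have hcell' : cellEx T' r₀ c₀ := by
          simpa [cellEx] using hcell
        rcases finsplit c' with ⟨c₁, rfl⟩ | rfl
        · -- bad pattern entirely in T'
          rcases finsplit r' with ⟨r₁, rfl⟩ | rfl
          · apply T'.no_bad_zero r₀ c₀ (by simpa [cellEx] using hcell') hf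
            refine ⟨⟨r₁, ?_, by simpa using hr'f⟩, ⟨c₁, by simpa using hlt, by simpa using hc'f⟩⟩
            simpa using hrel
          · simp at hr'f
        · -- the left 1 is in the new column: r₀ ∈ F, contradiction with allowed
          simp only [ef_cl, decide_eq_true_eq] at hc'f
          have hall := hF r₀ hc'f
          rcases finsplit r' with ⟨r₁, rfl⟩ | rfl
          · apply hall.1
            refine ⟨c₀, hcell', hf, r₁, ?_, by simpa using hr'f⟩
            show above T' r₁ r₀
            simpa [above] using hrel
          · simp at hr'f
      · -- cell in new column: nothing to its left
        have := c'.isLt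
        simp only [Fin.val_last] at hlt
        omega
    · -- bottom-right corner row
      have hc2 := hcell.2
      simp only [ew_last, Fin.val_last] at hc2
      rcases hc2 with ⟨h1, _⟩ | ⟨_, h2⟩
      · simp at h1
      · have : c = Fin.last m := by
          apply Fin.ext; have := c.isLt; simp; omega
        subst this
        have := c'.isLt
        simp only [Fin.val_last] at hlt
        omega

def glueS (T' : B m) : B (m+1) where
  west := ew T' false
  filling := ef T' ∅ false
  support := by
    intro r c h
    rcases finsplit r with ⟨r₀, rfl⟩ | rfl <;> rcases finsplit c with ⟨c₀, rfl⟩ | rfl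
    · simp only [ef_cc] at h
      have := T'.support _ _ h
      simpa using this
    · simp at h
    · simp at h
    · simp at h
  col_one := by
    intro c hc
    rcases finsplit c with ⟨c₀, rfl⟩ | rfl
    · simp only [ew_cs] at hc
      obtain ⟨r₀, hr⟩ := T'.col_one c₀ hc
      exact ⟨r₀.castSucc, by simpa using hr⟩
    · simp at hc
  diag_zero := by
    intro j hj hjj c
    rcases finsplit j with ⟨j₀, rfl⟩ | rfl
    · simp only [ew_cs] at hj
      simp only [ef_cc] at hjj
      rcases finsplit c with ⟨c₀, rfl⟩ | rfl
      · simp only [ef_cc]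
        exact T'.diag_zero j₀ hj hjj c₀
      · simp
    · simp at hj
  no_bad_zero := by
    intro r c hcell hf hbad
    obtain ⟨⟨r', hrel, hr'f⟩, ⟨c', hlt, hc'f⟩⟩ := hbad
    rcases finsplit c with ⟨c₀, rfl⟩ | rfl
    swap
    · simp at hcell
    rcases finsplit r with ⟨r₀, rfl⟩ | rfl
    swap
    · have hc2 := hcell.2
      simp only [ew_last, Fin.val_last, Fin.coe_castSucc] at hc2
      rcases hc2 with ⟨_, h1⟩ | ⟨h2, _⟩
      · have := c₀.isLt; omega
      · simp at h2
    simp only [ef_cc] at hf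
    rcases finsplit c' with ⟨c₁, rfl⟩ | rfl
    swap
    · simp at hc'f
    rcases finsplit r' with ⟨r₁, rfl⟩ | rfl
    swap
    · simp at hr'f
    apply T'.no_bad_zero r₀ c₀ (by simpa [cellEx] using hcell) hf
    refine ⟨⟨r₁, by simpa using hrel, by simpa using hr'f⟩,
      ⟨c₁, by simpa using hlt, by simpa using hc'f⟩⟩

@[simp] lemma del_glueW (T' : B m) (b F hF hne) : del (glueW T' b F hF hne) = T' := by
  apply tbext
  · funext r
    show ew T' true r.castSucc = T'.west r
    simp
  · funext r c
    show ef T' F b r.castSucc c.castSucc = T'.filling r c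
    simp

@[simp] lemma del_glueS (T' : B m) : del (glueS T') = T' := by
  apply tbext
  · funext r
    show ew T' false r.castSucc = T'.west r
    simp
  · funext r c
    show ef T' ∅ false r.castSucc c.castSucc = T'.filling r c
    simp

/-! ### Reconstruction -/

noncomputable def encF (T : B (m+1)) : Finset (Fin m) :=
  univ.filter (fun r => T.filling r.castSucc (Fin.last m) = true)

lemma mem_encF {T : B (m+1)} {r : Fin m} : r ∈ encF T ↔ T.filling r.castSucc (Fin.last m) = true := by
  simp [encF]

lemma encF_allowed (T : B (m+1)) : ∀ r ∈ encF T, allowed (del T) r := by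
  intro r hr
  rw [mem_encF] at hr
  constructor
  · rintro ⟨c, hcell, hf, r', hrel, hr'f⟩
    rw [cellEx_del] at hcell
    apply T.no_bad_zero r.castSucc c.castSucc hcell (by simpa using hf)
    refine ⟨⟨r'.castSucc, (above_del T r' r).1 hrel, by simpa using hr'f⟩,
      ⟨Fin.last m, by simpa using c.isLt, hr⟩⟩
  · rintro ⟨hw, hd⟩
    have := T.diag_zero r.castSucc (by simpa using hw) (by simpa using hd) (Fin.last m)
    rw [this] at hr
    exact Bool.false_ne_true hr

lemma encF_ne (T : B (m+1)) (hw : T.west (Fin.last m) = true) :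
    T.filling (Fin.last m) (Fin.last m) = true ∨ (encF T).Nonempty := by
  obtain ⟨r, hr⟩ := T.col_one (Fin.last m) hw
  rcases finsplit r with ⟨r₀, rfl⟩ | rfl
  · exact Or.inr ⟨r₀, mem_encF.2 hr⟩
  · exact Or.inl hr

lemma recon_west (T : B (m+1)) (hw : T.west (Fin.last m) = true) :
    T = glueW (del T) (T.filling (Fin.last m) (Fin.last m)) (encF T)
      (encF_allowed T) (encF_ne T hw) := by
  apply tbext
  · funext r
    show T.west r = ew (del T) true r
    rcases finsplit r with ⟨r₀, rfl⟩ | rfl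
    · simp
    · simp [hw]
  · funext r c
    show T.filling r c = ef (del T) (encF T) (T.filling (Fin.last m) (Fin.last m)) r c
    rcases finsplit r with ⟨r₀, rfl⟩ | rfl <;> rcases finsplit c with ⟨c₀, rfl⟩ | rfl
    · simp
    · simp only [ef_cl]
      rcases h : T.filling r₀.castSucc (Fin.last m)
      · simp [mem_encF, h]
      · simp [mem_encF, h]
    · simp only [ef_lc]
      apply fill_false
      rintro ⟨_, ⟨h1, _⟩ | ⟨_, h2⟩⟩
      · rw [hw] at h1; simp at h1
      · simp only [Fin.val_last, Fin.coe_castSucc] at h2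
        have := c₀.isLt; omega
    · simp
  
lemma recon_south (T : B (m+1)) (hw : T.west (Fin.last m) = false) :
    T = glueS (del T) := by
  apply tbext
  · funext r
    show T.west r = ew (del T) false r
    rcases finsplit r with ⟨r₀, rfl⟩ | rfl
    · simp
    · simp [hw]
  · funext r c
    show T.filling r c = ef (del T) ∅ false r c
    rcases finsplit r with ⟨r₀, rfl⟩ | rfl <;> rcases finsplit c with ⟨c₀, rfl⟩ | rfl
    · simp
    · simp only [ef_cl]
      apply Eq.trans (fill_false _ _ _ ?_) (by simp)
      rintro ⟨h1, _⟩
      rw [hw] at h1; simp at h1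
    · simp only [ef_lc]
      apply fill_false
      rintro ⟨_, ⟨h1, h2⟩ | ⟨h2, _⟩⟩
      · simp only [Fin.val_last, Fin.coe_castSucc] at h2
        have := c₀.isLt; omega
      · rw [hw] at h2; simp at h2
    · simp only [ef_ll]
      apply fill_false
      rintro ⟨h1, _⟩
      rw [hw] at h1; simp at h1

end TB
namespace TB
open Finset
open scoped Classical
variable {n m : ℕ}

/-! ### Allowed rows of extensions -/

lemma above_glue_last_cs {T' : B m} {bw : Bool} {w f sup co nbz dz} (r₀ : Fin m)
    (hG : (⟨w, f, sup, co, nbz, dz⟩ : B (m+1)).west = ew T' bw) : True := trivial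

lemma cellEx_glueW_cs (T' : B m) (b F hF hne) (r₀ c₀ : Fin m) :
    cellEx (glueW T' b F hF hne) r₀.castSucc c₀.castSucc ↔ cellEx T' r₀ c₀ := by
  show cellEx ⟨ew T' true, ef T' F b, _, _, _, _⟩ _ _ ↔ _
  simp [cellEx]

lemma cellEx_glueW_last (T' : B m) (b F hF hne) (r₀ : Fin m) :
    cellEx (glueW T' b F hF hne) r₀.castSucc (Fin.last m) := by
  show cellEx ⟨ew T' true, ef T' F b, _, _, _, _⟩ _ _
  refine ⟨by simp, ?_⟩
  rcases Bool.eq_false_or_eq_true (T'.west r₀) with hw | hw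
  · exact Or.inr ⟨by simpa using hw, by simpa using le_of_lt r₀.isLt⟩
  · exact Or.inl ⟨by simpa using hw, by simpa using r₀.isLt⟩

lemma above_glueW_cs (T' : B m) (b F hF hne) (r₁ r₀ : Fin m) :
    above (glueW T' b F hF hne) r₁.castSucc r₀.castSucc ↔ above T' r₁ r₀ := by
  show above ⟨ew T' true, ef T' F b, _, _, _, _⟩ _ _ ↔ _
  simp [above]

lemma above_glueW_last (T' : B m) (b F hF hne) (r₀ : Fin m) :
    above (glueW T' b F hF hne) (Fin.last m) r₀.castSucc := by
  show above ⟨ew T' true, ef T' F b, _, _, _, _⟩ _ _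
  rcases Bool.eq_false_or_eq_true (T'.west r₀) with hw | hw
  · exact Or.inr (Or.inl ⟨by simp, by simpa using hw, by simpa using r₀.isLt⟩)
  · exact Or.inl ⟨by simp, by simpa using hw⟩

lemma not_above_glueW_of_last (T' : B m) (b F hF hne) (r' : Fin (m+1)) :
    ¬ above (glueW T' b F hF hne) r' (Fin.last m) := by
  rintro (⟨_, h⟩ | ⟨_, _, h⟩ | ⟨_, h, _⟩)
  · rw [show (glueW T' b F hF hne).west (Fin.last m) = true from by show ew T' true _ = true; simp] at h
    simp at h
  · have := r'.isLt; simp only [Fin.val_last] at h; omega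
  · rw [show (glueW T' b F hF hne).west (Fin.last m) = true from by show ew T' true _ = true; simp] at h
    simp at h

lemma glueW_west_cs (T' : B m) (b F hF hne) (r₀ : Fin m) :
    (glueW T' b F hF hne).west r₀.castSucc = T'.west r₀ := by
  show ew T' true _ = _; simp

lemma glueW_west_last (T' : B m) (b F hF hne) :
    (glueW T' b F hF hne).west (Fin.last m) = true := by
  show ew T' true _ = _; simp

lemma glueW_fill_cc (T' : B m) (b F hF hne) (r₀ c₀ : Fin m) :
    (glueW T' b F hF hne).filling r₀.castSucc c₀.castSucc = T'.filling r₀ c₀ := by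
  show ef T' F b _ _ = _; simp

lemma glueW_fill_cl (T' : B m) (b F hF hne) (r₀ : Fin m) :
    (glueW T' b F hF hne).filling r₀.castSucc (Fin.last m) = decide (r₀ ∈ F) := by
  show ef T' F b _ _ = _; simp

lemma glueW_fill_lc (T' : B m) (b F hF hne) (c₀ : Fin m) :
    (glueW T' b F hF hne).filling (Fin.last m) c₀.castSucc = false := by
  show ef T' F b _ _ = _; simp

lemma glueW_fill_ll (T' : B m) (b F hF hne) :
    (glueW T' b F hF hne).filling (Fin.last m) (Fin.last m) = b := by
  show ef T' F b _ _ = _; simp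

lemma allowed_glueW_cs (T' : B m) (b F hF hne) (r₀ : Fin m) :
    allowed (glueW T' b F hF hne) r₀.castSucc ↔
      (r₀ ∈ F ∨ (allowed T' r₀ ∧ b = false ∧ ∀ r' ∈ F, ¬ above T' r' r₀)) := by
  set G := glueW T' b F hF hne with hG
  constructor
  · rintro ⟨hres, hzd⟩
    by_cases hmem : r₀ ∈ F
    · exact Or.inl hmem
    right
    have hb : b = false := by
      rcases Bool.eq_false_or_eq_true b with h | h
      swap
      · exact h
      exfalso; apply hres
      refine ⟨Fin.last m, cellEx_glueW_last T' b F hF hne r₀, ?_, Fin.last m,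
        above_glueW_last T' b F hF hne r₀, ?_⟩
      · rw [glueW_fill_cl]; simpa using hmem
      · rw [glueW_fill_ll]; exact h
    have hnoab : ∀ r' ∈ F, ¬ above T' r' r₀ := by
      intro r' hr' hab
      apply hres
      refine ⟨Fin.last m, cellEx_glueW_last T' b F hF hne r₀, ?_, r'.castSucc,
        (above_glueW_cs T' b F hF hne r' r₀).2 hab, ?_⟩
      · rw [glueW_fill_cl]; simpa using hmem
      · rw [glueW_fill_cl]; simpa using hr'
    refine ⟨⟨?_, ?_⟩, hb, hnoab⟩
    · rintro ⟨c₀, hce, hf, r₁, hab, hfb⟩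
      apply hres
      refine ⟨c₀.castSucc, (cellEx_glueW_cs T' b F hF hne r₀ c₀).2 hce, ?_, r₁.castSucc,
        (above_glueW_cs T' b F hF hne r₁ r₀).2 hab, ?_⟩
      · rw [glueW_fill_cc]; exact hf
      · rw [glueW_fill_cc]; exact hfb
    · rintro ⟨hw, hd⟩
      exact hzd ⟨by rw [glueW_west_cs]; exact hw, by rw [glueW_fill_cc]; exact hd⟩
  · intro h
    have hall : allowed T' r₀ := by
      rcases h with hmem | ⟨ha, _, _⟩
      · exact hF r₀ hmem
      · exact ha
    constructor
    · rintro ⟨c, hce, hf, r', hab, hfb⟩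
      rcases finsplit c with ⟨c₀, rfl⟩ | rfl
      · -- old column: lift to T'
        rcases finsplit r' with ⟨r₁, rfl⟩ | rfl
        · apply hall.1
          exact ⟨c₀, (cellEx_glueW_cs T' b F hF hne r₀ c₀).1 hce,
            by rwa [glueW_fill_cc] at hf, r₁,
            (above_glueW_cs T' b F hF hne r₁ r₀).1 hab,
            by rwa [glueW_fill_cc] at hfb⟩
        · rw [glueW_fill_lc] at hfb; simp at hfb
      · -- new column
        rw [glueW_fill_cl] at hf
        have hr₀F : r₀ ∉ F := by simpa using hf
        rcases h with hmem | ⟨_, hb, hnoab⟩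
        · exact hr₀F hmem
        rcases finsplit r' with ⟨r₁, rfl⟩ | rfl
        · rw [glueW_fill_cl] at hfb
          have : r₁ ∈ F := by simpa using hfb
          exact hnoab r₁ this ((above_glueW_cs T' b F hF hne r₁ r₀).1 hab)
        · rw [glueW_fill_ll] at hfb
          rw [hb] at hfb; simp at hfb
    · rintro ⟨hw, hd⟩
      rw [glueW_west_cs] at hw
      rw [glueW_fill_cc] at hd
      exact hall.2 ⟨hw, hd⟩

lemma allowed_glueW_last (T' : B m) (b F hF hne) :
    allowed (glueW T' b F hF hne) (Fin.last m) ↔ b = true := by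
  constructor
  · rintro ⟨_, hzd⟩
    rcases Bool.eq_false_or_eq_true b with h | h
    · exact h
    · exfalso
      exact hzd ⟨glueW_west_last T' b F hF hne, by rw [glueW_fill_ll]; exact h⟩
  · intro hb
    constructor
    · rintro ⟨c, hce, hf, r', hab, hfb⟩
      exact not_above_glueW_of_last T' b F hF hne r' hab
    · rintro ⟨_, hd⟩
      rw [glueW_fill_ll, hb] at hd; simp at hd

lemma allowed_glueS_cs (T' : B m) (r₀ : Fin m) :
    allowed (glueS T') r₀.castSucc ↔ allowed T' r₀ := by
  have hwl : (glueS T').west (Fin.last m) = false := by show ew T' false _ = _; simp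
  have hwc : ∀ r : Fin m, (glueS T').west r.castSucc = T'.west r := by
    intro r; show ew T' false _ = _; simp
  have hfcc : ∀ r c : Fin m, (glueS T').filling r.castSucc c.castSucc = T'.filling r c := by
    intro r c; show ef T' ∅ false _ _ = _; simp
  constructor
  · rintro ⟨hres, hzd⟩
    constructor
    · rintro ⟨c₀, hce, hf, r₁, hab, hfb⟩
      apply hres
      refine ⟨c₀.castSucc, ?_, by rw [hfcc]; exact hf, r₁.castSucc, ?_, by rw [hfcc]; exact hfb⟩
      · obtain ⟨h1, h2⟩ := hce
        exact ⟨by rw [hwc]; exact h1, by simpa [hwc] using h2⟩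
      · simpa [above, hwc] using hab
    · rintro ⟨hw, hd⟩
      exact hzd ⟨by rw [hwc]; exact hw, by rw [hfcc]; exact hd⟩
  · rintro ⟨hres, hzd⟩
    constructor
    · rintro ⟨c, hce, hf, r', hab, hfb⟩
      rcases finsplit c with ⟨c₀, rfl⟩ | rfl
      swap
      · exact absurd hce.1 (by rw [hwl]; simp)
      rcases finsplit r' with ⟨r₁, rfl⟩ | rfl
      swap
      · rw [show (glueS T').filling (Fin.last m) c₀.castSucc = false from by
          show ef T' ∅ false _ _ = _; simp] at hfb
        simp at hfb
      apply hres
      refine ⟨c₀, ?_, by rwa [hfcc] at hf, r₁, ?_, by rwa [hfcc] at hfb⟩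
      · obtain ⟨h1, h2⟩ := hce
        exact ⟨by rwa [hwc] at h1, by simpa [hwc] using h2⟩
      · simpa [above, hwc] using hab
    · rintro ⟨hw, hd⟩
      rw [hwc] at hw; rw [hfcc] at hd
      exact hzd ⟨hw, hd⟩

lemma allowed_glueS_last (T' : B m) : allowed (glueS T') (Fin.last m) := by
  have hwl : (glueS T').west (Fin.last m) = false := by show ew T' false _ = _; simp
  constructor
  · rintro ⟨c, hce, hf, r', hab, hfb⟩
    obtain ⟨h1, h2⟩ := hce
    rcases h2 with ⟨_, h3⟩ | ⟨h3, _⟩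
    · rcases finsplit c with ⟨c₀, rfl⟩ | rfl
      · simp only [Fin.val_last, Fin.coe_castSucc] at h3
        have := c₀.isLt; omega
      · rw [hwl] at h1; simp at h1
    · rw [hwl] at h3; simp at h3
  · rintro ⟨hw, _⟩
    rw [hwl] at hw; simp at hw

end TB
namespace TB
open Finset
open scoped Classical
variable {n m : ℕ}

/-! ### minimal-key element and the statistic -/

noncomputable def mke (k : Fin m → ℕ) (G : Finset (Fin m)) (h : G.Nonempty) : Fin m :=
  (G.exists_min_image k h).choose

lemma mke_mem (k : Fin m → ℕ) (G : Finset (Fin m)) (h : G.Nonempty) : mke k G h ∈ G :=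
  (G.exists_min_image k h).choose_spec.1

lemma mke_min (k : Fin m → ℕ) (G : Finset (Fin m)) (h : G.Nonempty) :
    ∀ r ∈ G, k (mke k G h) ≤ k r :=
  (G.exists_min_image k h).choose_spec.2

noncomputable def statA (T' : B m) (b : Bool) (F : Finset (Fin m)) : ℕ :=
  if b then F.card + 1
  else if h : F.Nonempty then
    F.card + ((aSet T').filter (fun r => key T' r < key T' (mke (key T') F h))).card
  else aS T' + 1

lemma aS_glueS (T' : B m) : aS (glueS T') = statA T' false ∅ := by
  have h1 : aSet (glueS T') = insert (Fin.last m) ((aSet T').image Fin.castSucc) := by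
    ext x
    rcases finsplit x with ⟨x₀, rfl⟩ | rfl
    · rw [mem_aSet, allowed_glueS_cs]
      constructor
      · intro h
        exact mem_insert_of_mem (mem_image_of_mem _ (mem_aSet.2 h))
      · intro h
        rcases mem_insert.1 h with h | h
        · exfalso
          have := Fin.castSucc_lt_last x₀; rw [h] at this; exact absurd this (lt_irrefl _)
        · rcases mem_image.1 h with ⟨y, hy, hyx⟩
          have : y = x₀ := Fin.castSucc_injective m hyx
          subst this; exact mem_aSet.1 hy
    · rw [mem_aSet]
      exact ⟨fun _ => mem_insert_self _ _, fun _ => allowed_glueS_last T'⟩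
  have h2 : Fin.last m ∉ (aSet T').image Fin.castSucc := by
    simp only [mem_image, not_exists]
    rintro x ⟨_, hx⟩
    have := Fin.castSucc_lt_last x
    rw [hx] at this; exact absurd this (lt_irrefl _)
  rw [statA]
  simp only [Bool.false_eq_true, if_false, Finset.not_nonempty_empty, dif_neg, not_false_iff]
  rw [aS, h1, card_insert_of_notMem h2, card_image_of_injective _ (Fin.castSucc_injective m)]
  rfl

lemma aSet_glueW (T' : B m) (b F hF hne) :
    aSet (glueW T' b F hF hne) =
      (if b then {Fin.last m} else ∅) ∪
        ((F ∪ (if b then ∅ else (aSet T').filter (fun r => ∀ r' ∈ F, ¬ above T' r' r))).image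
          Fin.castSucc) := by
  ext x
  rcases finsplit x with ⟨x₀, rfl⟩ | rfl
  · rw [mem_aSet, allowed_glueW_cs]
    constructor
    · rintro (hmem | ⟨ha, hb, hno⟩)
      · exact mem_union_right _ (mem_image_of_mem _ (mem_union_left _ hmem))
      · refine mem_union_right _ (mem_image_of_mem _ (mem_union_right _ ?_))
        rw [hb]
        simp only [Bool.false_eq_true, if_false]
        exact mem_filter.2 ⟨mem_aSet.2 ha, hno⟩
    · intro h
      rcases mem_union.1 h with h | h
      · exfalso
        rcases Bool.eq_false_or_eq_true b with hb | hb <;> rw [hb] at h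
        · simp at h
        · simp at h
      · rcases mem_image.1 h with ⟨y, hy, hyx⟩
        have hyx0 : y = x₀ := Fin.castSucc_injective m hyx
        subst hyx0
        rcases mem_union.1 hy with h1 | h1
        · exact Or.inl h1
        · rcases Bool.eq_false_or_eq_true b with hb | hb <;> rw [hb] at h1
          · simp at h1
          · simp only [Bool.false_eq_true, if_false] at h1
            rcases mem_filter.1 h1 with ⟨ha, hno⟩
            exact Or.inr ⟨mem_aSet.1 ha, hb, hno⟩
  · rw [mem_aSet, allowed_glueW_last]
    constructor
    · intro hb
      rw [hb]
      exact mem_union_left _ (by simp)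
    · intro h
      rcases mem_union.1 h with h | h
      · rcases Bool.eq_false_or_eq_true b with hb | hb
        · exact hb
        · rw [hb] at h; simp at h
      · exfalso
        rcases mem_image.1 h with ⟨y, _, hy⟩
        have := Fin.castSucc_lt_last y; rw [hy] at this; exact absurd this (lt_irrefl _)

lemma filter_noabove (T' : B m) (F : Finset (Fin m)) (hF : ∀ r ∈ F, allowed T' r)
    (h : F.Nonempty) :
    (aSet T').filter (fun r => ∀ r' ∈ F, ¬ above T' r' r) =
      insert (mke (key T') F h) ((aSet T').filter (fun r => key T' r < key T' (mke (key T') F h))) := by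
  set p := mke (key T') F h with hp
  ext x
  simp only [mem_filter, mem_insert]
  constructor
  · rintro ⟨hx, hno⟩
    have hle : key T' x ≤ key T' p := by
      by_contra hlt
      exact hno p (mke_mem _ _ _) ((above_iff T' p x).2 (by omega))
    rcases lt_or_eq_of_le hle with hlt | heq
    · exact Or.inr ⟨hx, hlt⟩
    · exact Or.inl (key_inj T' heq)
  · rintro (rfl | ⟨hx, hlt⟩)
    · refine ⟨mem_aSet.2 (hF p (mke_mem _ _ _)), ?_⟩
      intro r' hr' hab
      have hmin := mke_min (key T') F h r' hr'
      rw [← hp] at hmin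
      rw [above_iff] at hab
      omega
    · refine ⟨hx, ?_⟩
      intro r' hr' hab
      have hmin := mke_min (key T') F h r' hr'
      rw [← hp] at hmin
      rw [above_iff] at hab
      omega

lemma aS_glueW (T' : B m) (b F hF hne) :
    aS (glueW T' b F hF hne) = statA T' b F := by
  rw [aS, aSet_glueW]
  rcases (Bool.eq_false_or_eq_true b).symm with hb | hb
  · -- b = false : F nonempty
    subst hb
    have hFne : F.Nonempty := by
      rcases hne with h | h
      · simp at h
      · exact h
    set p := mke (key T') F hFne with hp
    rw [statA]
    simp only [if_false, Bool.false_eq_true, dif_pos hFne]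
    have hun : F ∪ (aSet T').filter (fun r => ∀ r' ∈ F, ¬ above T' r' r) =
        F ∪ (aSet T').filter (fun r => key T' r < key T' p) := by
      rw [filter_noabove T' F hF hFne]
      ext x
      simp only [mem_union, mem_insert]
      constructor
      · rintro (h | h | h)
        · exact Or.inl h
        · exact Or.inl (h ▸ mke_mem _ _ _)
        · exact Or.inr h
      · rintro (h | h)
        · exact Or.inl h
        · exact Or.inr (Or.inr h)
    have hdisj : Disjoint F ((aSet T').filter (fun r => key T' r < key T' p)) := by
      rw [disjoint_left]
      intro x hxF hxfil
      have h1 := mke_min (key T') F hFne x hxF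
      rw [← hp] at h1
      have h2 := (mem_filter.1 hxfil).2
      omega
    simp only [if_false, Bool.false_eq_true, empty_union]
    rw [hun, card_image_of_injective _ (Fin.castSucc_injective m), card_union_of_disjoint hdisj]
  · subst hb
    rw [statA]
    simp only [if_true, union_empty]
    rw [card_union_of_disjoint, card_image_of_injective _ (Fin.castSucc_injective m), card_singleton]
    · omega
    · rw [disjoint_left]
      intro x hx1 hx2
      simp only [mem_singleton] at hx1
      rcases mem_image.1 hx2 with ⟨y, _, hy⟩
      rw [hx1] at hy
      have := Fin.castSucc_lt_last y
      rw [hy] at this; exact absurd this (lt_irrefl _)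

end TB
namespace TB
open Finset
open scoped Classical
variable {n m : ℕ}

/-! ### The fiber parametrization of one deletion -/

noncomputable def dec (W : B m) (b : Bool) (F : Finset (Fin m)) : B (m+1) :=
  if h : F ⊆ aSet W ∧ (b = true ∨ F.Nonempty) then
    glueW W b F (fun r hr => mem_aSet.1 (h.1 hr)) h.2
  else glueS W

noncomputable def encP (T : B (m+1)) : Bool × Finset (Fin m) :=
  (T.filling (Fin.last m) (Fin.last m), encF T)

lemma del_dec (W : B m) (b : Bool) (F : Finset (Fin m)) : del (dec W b F) = W := by
  rw [dec]; split <;> simp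

lemma encP_sub (T : B (m+1)) : (encP T).2 ⊆ aSet (del T) := by
  intro r hr
  exact mem_aSet.2 (encF_allowed T r hr)

lemma fill_last_last_south (T : B (m+1)) (hw : T.west (Fin.last m) = false) :
    T.filling (Fin.last m) (Fin.last m) = false := by
  apply fill_false
  rintro ⟨h1, _⟩
  rw [hw] at h1; simp at h1

lemma encF_south (T : B (m+1)) (hw : T.west (Fin.last m) = false) : encF T = ∅ := by
  ext r
  simp only [mem_encF, notMem_empty, iff_false]
  intro h
  have := (T.support _ _ h).1
  rw [hw] at this; simp at this

lemma dec_encP (T : B (m+1)) : dec (del T) (encP T).1 (encP T).2 = T := by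
  rcases (Bool.eq_false_or_eq_true (T.west (Fin.last m))).symm with hw | hw
  · rw [dec, dif_neg]
    · exact (recon_south T hw).symm
    · rintro ⟨_, h2 | h2⟩
      · rw [encP] at h2
        simp only at h2
        rw [fill_last_last_south T hw] at h2
        simp at h2
      · rw [encP] at h2
        simp only at h2
        rw [encF_south T hw] at h2
        exact absurd h2 (not_nonempty_empty)
  · rw [dec, dif_pos ⟨encP_sub T, by exact encF_ne T hw⟩]
    exact (recon_west T hw).symm
  
lemma encP_glueW (W : B m) (b F hF hne) : encP (glueW W b F hF hne) = (b, F) := by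
  rw [encP]
  refine Prod.ext ?_ ?_
  · simp only
    rw [glueW_fill_ll]
  · simp only
    ext r
    rw [mem_encF, glueW_fill_cl]
    simp

lemma encP_glueS (W : B m) : encP (glueS W) = (false, ∅) := by
  have hw : (glueS W).west (Fin.last m) = false := by show ew W false _ = _; simp
  rw [encP]
  refine Prod.ext ?_ ?_
  · simp only
    rw [fill_last_last_south _ hw]
  · simp only
    rw [encF_south _ hw]

lemma encP_dec (W : B m) (b : Bool) (F : Finset (Fin m)) (hF : F ⊆ aSet W) :
    encP (dec W b F) = if b = true ∨ F.Nonempty then (b, F) else (false, ∅) := by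
  rw [dec]
  by_cases h : b = true ∨ F.Nonempty
  · rw [dif_pos ⟨hF, h⟩, if_pos h, encP_glueW]
  · rw [dif_neg (by tauto), if_neg h, encP_glueS]

lemma aS_dec (W : B m) (b : Bool) (F : Finset (Fin m)) (hF : F ⊆ aSet W) :
    aS (dec W b F) = statA W b F := by
  rw [dec]
  by_cases h : b = true ∨ F.Nonempty
  · rw [dif_pos ⟨hF, h⟩, aS_glueW]
  · have hb : b = false := by rcases Bool.eq_false_or_eq_true b with h' | h' <;> tauto
    have hFe : F = ∅ := by
      rcases F.eq_empty_or_nonempty with h' | h' <;> tauto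
    rw [dif_neg (by tauto), aS_glueS, hb, hFe]

def dOne (T : B (m+1)) : Prop :=
  T.west (Fin.last m) = true ∧ T.filling (Fin.last m) (Fin.last m) = true

lemma dOne_dec (W : B m) (b : Bool) (F : Finset (Fin m)) (hF : F ⊆ aSet W) :
    dOne (dec W b F) ↔ b = true := by
  rw [dec]
  by_cases h : b = true ∨ F.Nonempty
  · rw [dif_pos ⟨hF, h⟩]
    unfold dOne
    rw [glueW_fill_ll, glueW_west_last]
    simp
  · have hb : b = false := by rcases Bool.eq_false_or_eq_true b with h' | h' <;> tauto
    rw [dif_neg (by tauto), hb]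
    unfold dOne
    have hw : (glueS W).west (Fin.last m) = false := by show ew W false _ = _; simp
    rw [hw]
    simp

/-- summing over a single deletion fiber -/
lemma sum_delfiber (W : B m) (f : B (m+1) → ℕ) :
    ∑ T ∈ univ.filter (fun T : B (m+1) => del T = W), f T
      = ∑ x ∈ (univ : Finset Bool) ×ˢ (aSet W).powerset, f (dec W x.1 x.2) := by
  refine Finset.sum_nbij' (fun T => encP T) (fun x => dec W x.1 x.2) ?_ ?_ ?_ ?_ ?_
  · intro T hT
    rw [mem_filter] at hT
    rw [mem_product, mem_powerset]
    exact ⟨mem_univ _, hT.2 ▸ encP_sub T⟩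
  · intro x hx
    rw [mem_filter]
    exact ⟨mem_univ _, del_dec W x.1 x.2⟩
  · intro T hT
    rw [mem_filter] at hT
    show dec W (encP T).1 (encP T).2 = T
    rw [← hT.2]
    exact dec_encP T
  · intro x hx
    rw [mem_product, mem_powerset] at hx
    show encP (dec W x.1 x.2) = x
    rw [encP_dec W x.1 x.2 hx.2]
    by_cases h : x.1 = true ∨ x.2.Nonempty
    · rw [if_pos h]
    · rw [if_neg h]
      push_neg at h
      obtain ⟨h1, h2⟩ := h
      have hb : x.1 = false := by rcases Bool.eq_false_or_eq_true x.1 with h' | h' <;> tauto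
      have hF : x.2 = ∅ := by rcases x.2.eq_empty_or_nonempty with h' | h' <;> tauto
      rw [← hb, ← hF]
  · intro T hT
    rw [mem_filter] at hT
    show f T = f (dec W (encP T).1 (encP T).2)
    rw [← hT.2, dec_encP T]

end TB
namespace TB
open Finset
open scoped Classical
variable {n m : ℕ}

/-! ### Abstract sum recursions -/

def psi1 (G : ℕ → ℕ) (a : ℕ) : ℕ := ∑ q ∈ range (a+1), a.choose q * G (q+1)

def HH : ℕ → (ℕ → ℕ) → ℕ
  | 0, G => G 1
  | a+1, G => psi1 G a + HH a (fun s => G (s+1))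

noncomputable def mstat (k : Fin m → ℕ) (S F : Finset (Fin m)) : ℕ :=
  if h : F.Nonempty then F.card + (S.filter (fun r => k r < k (mke k F h))).card
  else S.card + 1

lemma sum_powerset_card (S : Finset (Fin m)) (G : ℕ → ℕ) :
    ∑ F ∈ S.powerset, G (F.card + 1) = psi1 G S.card := by
  rw [Finset.sum_powerset]
  rw [psi1]
  refine Finset.sum_congr rfl ?_
  intro q hq
  have : ∀ F ∈ S.powersetCard q, G (F.card + 1) = G (q+1) := by
    intro F hF
    rw [(mem_powersetCard.1 hF).2]
  rw [Finset.sum_congr rfl this, Finset.sum_const, card_powersetCard, smul_eq_mul]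

lemma mke_unique (k : Fin m → ℕ) (hinj : ∀ x y : Fin m, k x = k y → x = y)
    (F : Finset (Fin m)) (h : F.Nonempty) (p : Fin m) (hp : p ∈ F)
    (hmin : ∀ r ∈ F, k p ≤ k r) : mke k F h = p := by
  apply hinj
  have h1 := mke_min k F h p hp
  have h2 := hmin _ (mke_mem k F h)
  omega

lemma keyLemma (k : Fin m → ℕ) (hinj : ∀ x y : Fin m, k x = k y → x = y) :
    ∀ (S : Finset (Fin m)) (G : ℕ → ℕ), ∑ F ∈ S.powerset, G (mstat k S F) = HH S.card G := by
  intro S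
  induction S using Finset.strongInduction with
  | _ S ih =>
    intro G
    rcases S.eq_empty_or_nonempty with rfl | hS
    · simp [mstat, HH]
    · have hpS : mke k S hS ∈ S := mke_mem k S hS
      set p := mke k S hS with hp
      have hins : S = insert p (S.erase p) := (insert_erase hpS).symm
      have hp1 : p ∉ S.erase p := notMem_erase _ _
      have hpmin : ∀ r ∈ S, k p ≤ k r := by
        intro r hr; rw [hp]; exact mke_min k S hS r hr
      have hcard : S.card = (S.erase p).card + 1 := by
        have h1 := card_erase_of_mem hpS
        have h2 := card_pos.2 hS
        omega
      -- two statistics computations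
      have hstat1 : ∀ F' ∈ (S.erase p).powerset, mstat k S (insert p F') = F'.card + 1 := by
        intro F' hF'
        rw [mem_powerset] at hF'
        have hpne : p ∉ F' := fun h => hp1 (hF' h)
        have hne : (insert p F').Nonempty := insert_nonempty _ _
        rw [mstat, dif_pos hne]
        have hmke : mke k (insert p F') hne = p := by
          apply mke_unique k hinj _ _ p (mem_insert_self _ _)
          intro r hr
          rcases mem_insert.1 hr with rfl | hr
          · exact le_refl _
          · exact hpmin r (mem_of_mem_erase (hF' hr))
        rw [hmke]
        have : S.filter (fun r => k r < k p) = ∅ := by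
          rw [filter_eq_empty_iff]
          intro r hr
          have := hpmin r hr
          omega
        rw [this, card_empty, card_insert_of_notMem hpne]
      have hstat2 : ∀ F' ∈ (S.erase p).powerset, mstat k S F' = mstat k (S.erase p) F' + 1 := by
        intro F' hF'
        rw [mem_powerset] at hF'
        rcases F'.eq_empty_or_nonempty with rfl | hne
        · rw [mstat, mstat, dif_neg, dif_neg, hcard]
          · exact not_nonempty_empty
          · exact not_nonempty_empty
        · rw [mstat, mstat, dif_pos hne, dif_pos hne]
          have hq : mke k F' hne ∈ F' := mke_mem _ _ _
          have hqS' : mke k F' hne ∈ S.erase p := hF' hq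
          set q := mke k F' hne with hqdef
          have hpq : p ≠ q := by
            intro h; rw [← h] at hqS'; exact hp1 hqS'
          have hkpq : k p < k q := by
            have h1 := hpmin q (mem_of_mem_erase hqS')
            rcases lt_or_eq_of_le h1 with h | h
            · exact h
            · exact absurd (hinj _ _ h) hpq
          have : S.filter (fun r => k r < k q) =
              insert p ((S.erase p).filter (fun r => k r < k q)) := by
            conv_lhs => rw [hins]
            rw [filter_insert, if_pos hkpq]
          rw [this, card_insert_of_notMem (fun hc => hp1 (mem_of_mem_filter _ hc))]
          omega
      have hpow : S.powerset = (insert p (S.erase p)).powerset := by rw [← hins]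
      rw [hpow, sum_powerset_insert hp1 (fun F => G (mstat k S F)), hcard, HH]
      have e1 : ∑ F' ∈ (S.erase p).powerset, G (mstat k S F')
          = HH (S.erase p).card (fun s => G (s+1)) := by
        rw [← ih (S.erase p) (erase_ssubset hpS) (fun s => G (s+1))]
        refine Finset.sum_congr rfl ?_
        intro F' hF'
        rw [hstat2 F' hF']
      have e2 : ∑ F' ∈ (S.erase p).powerset, G (mstat k S (insert p F'))
          = psi1 G (S.erase p).card := by
        rw [← sum_powerset_card (S.erase p) G]
        refine Finset.sum_congr rfl ?_
        intro F' hF'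
        rw [hstat1 F' hF']
      rw [e1, e2]
      omega

lemma statA_false_eq (W : B m) (F : Finset (Fin m)) :
    statA W false F = mstat (key W) (aSet W) F := by
  rw [statA, mstat]
  simp only [Bool.false_eq_true, if_false]
  rfl

noncomputable def Psi (G : ℕ → ℕ) (a : ℕ) : ℕ := psi1 G a + HH a G

lemma innerSum (W : B m) (G : ℕ → ℕ) :
    ∑ x ∈ (univ : Finset Bool) ×ˢ (aSet W).powerset, G (statA W x.1 x.2) = Psi G (aS W) := by
  rw [Finset.sum_product]
  have : ∀ b : Bool, ∑ F ∈ (aSet W).powerset, G (statA W b F)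
      = if b then psi1 G (aS W) else HH (aS W) G := by
    intro b
    rcases Bool.eq_false_or_eq_true b with hb | hb <;> subst hb
    · simp only [if_true]
      have : ∀ F ∈ (aSet W).powerset, G (statA W true F) = G (F.card + 1) := by
        intro F _
        rw [statA]; simp
      rw [Finset.sum_congr rfl this, sum_powerset_card]
      rfl
    · simp only [Bool.false_eq_true, if_false]
      have : ∀ F ∈ (aSet W).powerset, G (statA W false F) = G (mstat (key W) (aSet W) F) := by
        intro F _
        rw [statA_false_eq]
      rw [Finset.sum_congr rfl this, keyLemma (key W) (fun x y h => key_inj W h)]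
      rfl
  rw [Fintype.sum_bool]
  rw [this true, this false]
  simp [Psi]

/-! ### Iterated deletion -/

def iterdel : (t : ℕ) → B (m + t) → B m
  | 0, T => T
  | t+1, T => iterdel t (del T)

lemma sum_fiber_succ (t : ℕ) (V : B m) (f : B (m+(t+1)) → ℕ) :
    ∑ T ∈ univ.filter (fun T : B (m+(t+1)) => iterdel (t+1) T = V), f T
      = ∑ W ∈ univ.filter (fun W : B (m+t) => iterdel t W = V),
          ∑ T ∈ univ.filter (fun T : B (m+t+1) => del T = W), f T := by
  have h0 : ∀ T ∈ univ.filter (fun T : B (m+(t+1)) => iterdel (t+1) T = V),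
      del T ∈ univ.filter (fun W : B (m+t) => iterdel t W = V) := by
    intro T hT
    rw [mem_filter] at hT
    rw [mem_filter]
    exact ⟨mem_univ _, hT.2⟩
  rw [← Finset.sum_fiberwise_of_maps_to h0 f]
  refine Finset.sum_congr rfl ?_
  intro W hW
  rw [mem_filter] at hW
  refine Finset.sum_congr ?_ (fun _ _ => rfl)
  ext T
  simp only [mem_filter, mem_univ, true_and]
  constructor
  · rintro ⟨h1, h2⟩; exact h2
  · intro h
    refine ⟨?_, h⟩
    show iterdel t (del T) = V
    rw [h, hW.2]

lemma mainCount : ∀ (t m : ℕ) (V₁ V₂ : B m), aS V₁ = aS V₂ → ∀ G : ℕ → ℕ,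
    (∑ T ∈ univ.filter (fun T : B (m+t) => iterdel t T = V₁), G (aS T)) =
    (∑ T ∈ univ.filter (fun T : B (m+t) => iterdel t T = V₂), G (aS T)) := by
  intro t
  induction t with
  | zero =>
    intro m V₁ V₂ h G
    have e : ∀ V : B m, univ.filter (fun T : B (m+0) => iterdel 0 T = V) = {V} := by
      intro V
      ext T
      simp only [mem_filter, mem_univ, true_and, mem_singleton]
      exact Iff.rfl
    rw [e V₁, e V₂, sum_singleton, sum_singleton, h]
  | succ t ih =>
    intro m V₁ V₂ h G
    rw [sum_fiber_succ t V₁, sum_fiber_succ t V₂]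
    have e : ∀ W : B (m+t), ∑ T ∈ univ.filter (fun T : B (m+t+1) => del T = W), G (aS T)
        = Psi G (aS W) := by
      intro W
      rw [sum_delfiber W (fun T => G (aS T))]
      rw [← innerSum W G]
      refine Finset.sum_congr rfl ?_
      intro x hx
      rw [mem_product, mem_powerset] at hx
      rw [aS_dec W x.1 x.2 hx.2]
    have e1 : ∀ V : B m, ∑ W ∈ univ.filter (fun W : B (m+t) => iterdel t W = V),
        ∑ T ∈ univ.filter (fun T : B (m+t+1) => del T = W), G (aS T)
        = ∑ W ∈ univ.filter (fun W : B (m+t) => iterdel t W = V), Psi G (aS W) := by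
      intro V
      exact Finset.sum_congr rfl (fun W _ => e W)
    rw [e1 V₁, e1 V₂]
    exact ih m V₁ V₂ h (Psi G)

end TB
namespace TB
open Finset
open scoped Classical
variable {n m : ℕ}

/-! ### The involution on fiber data -/

noncomputable def iota (W : B m) (x : Bool × Finset (Fin m)) : Bool × Finset (Fin m) :=
  if x.1 = true then
    (if h : (aSet W \ x.2).Nonempty then
      (false, insert (mke (key W) (aSet W \ x.2) h)
        (x.2.filter (fun r => key W (mke (key W) (aSet W \ x.2) h) < key W r)))
    else (false, ∅))
  else
    (if h : x.2.Nonempty then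
      (true, (x.2.erase (mke (key W) x.2 h)) ∪
        (aSet W).filter (fun r => key W r < key W (mke (key W) x.2 h)))
    else (true, aSet W))

lemma iota_eval_true (W : B m) (F : Finset (Fin m)) :
    iota W (true, F) = if h : (aSet W \ F).Nonempty then
      (false, insert (mke (key W) (aSet W \ F) h)
        (F.filter (fun r => key W (mke (key W) (aSet W \ F) h) < key W r)))
    else (false, ∅) := by
  rw [iota]; simp

lemma iota_eval_false (W : B m) (F : Finset (Fin m)) :
    iota W (false, F) = if h : F.Nonempty then
      (true, (F.erase (mke (key W) F h)) ∪
        (aSet W).filter (fun r => key W r < key W (mke (key W) F h)))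
    else (true, aSet W) := by
  rw [iota]; simp

lemma iota_fst (W : B m) (x : Bool × Finset (Fin m)) : (iota W x).1 = !x.1 := by
  rcases x with ⟨b, F⟩
  rcases Bool.eq_false_or_eq_true b with hb | hb <;> subst hb
  · rw [iota_eval_true]; split <;> rfl
  · rw [iota_eval_false]; split <;> rfl

lemma iota_sub (W : B m) (x : Bool × Finset (Fin m)) (hF : x.2 ⊆ aSet W) :
    (iota W x).2 ⊆ aSet W := by
  rcases x with ⟨b, F⟩
  simp only at hF
  rcases Bool.eq_false_or_eq_true b with hb | hb <;> subst hb
  · rw [iota_eval_true]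
    split
    case isTrue h =>
      simp only
      intro r hr
      rcases mem_insert.1 hr with rfl | hr
      · exact (mem_sdiff.1 (mke_mem (key W) _ h)).1
      · exact hF (mem_of_mem_filter _ hr)
    case isFalse h => simp
  · rw [iota_eval_false]
    split
    case isTrue h =>
      simp only
      intro r hr
      rcases mem_union.1 hr with hr | hr
      · exact hF (mem_of_mem_erase hr)
      · exact mem_of_mem_filter _ hr
    case isFalse h => exact fun r hr => hr

lemma iota_invol (W : B m) (x : Bool × Finset (Fin m)) (hF : x.2 ⊆ aSet W) :
    iota W (iota W x) = x := by
  rcases x with ⟨b, F⟩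
  simp only at hF
  set k := key W with hk
  set S := aSet W with hS
  have kinj : ∀ a b : Fin m, k a = k b → a = b := fun a b h => key_inj W h
  rcases Bool.eq_false_or_eq_true b with hb | hb <;> subst hb
  · -- b = true
    rw [iota_eval_true]
    split
    case isTrue h =>
      -- case A
      set p := mke k (S \ F) h with hp
      have hpS : p ∈ S := (mem_sdiff.1 (mke_mem k _ h)).1
      have hpF : p ∉ F := (mem_sdiff.1 (mke_mem k _ h)).2
      have hpmin : ∀ r ∈ S \ F, k p ≤ k r := by
        intro r hr; rw [hp]; exact mke_min k _ h r hr
      set F2 := insert p (F.filter (fun r => k p < k r)) with hF2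
      have hne2 : F2.Nonempty := insert_nonempty _ _
      rw [iota_eval_false, dif_pos hne2]
      have hmke2 : mke k F2 hne2 = p := by
        apply mke_unique k kinj _ _ p (mem_insert_self _ _)
        intro r hr
        rcases mem_insert.1 hr with rfl | hr
        · exact le_refl _
        · exact le_of_lt (mem_filter.1 hr).2
      rw [hmke2]
      have hpnf : p ∉ F.filter (fun r => k p < k r) := by
        intro hc
        exact absurd (mem_filter.1 hc).2 (lt_irrefl _)
      have herase : F2.erase p = F.filter (fun r => k p < k r) := by
        rw [hF2, erase_insert hpnf]
      have hunion : F.filter (fun r => k p < k r) ∪ S.filter (fun r => k r < k p) = F := by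
        ext r
        simp only [mem_union, mem_filter]
        constructor
        · rintro (⟨hr, _⟩ | ⟨hrS, hlt⟩)
          · exact hr
          · by_contra hrF
            have := hpmin r (mem_sdiff.2 ⟨hrS, hrF⟩)
            omega
        · intro hr
          have hrp : r ≠ p := fun hc => hpF (hc ▸ hr)
          have : k r ≠ k p := fun hc => hrp (kinj _ _ hc)
          rcases Nat.lt_or_ge (k p) (k r) with hlt | hge
          · exact Or.inl ⟨hr, hlt⟩
          · exact Or.inr ⟨hF hr, by omega⟩
      rw [herase, hunion]
    case isFalse h =>
      -- case B : F = S
      have hFS : F = S := by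
        apply Subset.antisymm hF
        intro r hr
        by_contra hc
        exact h ⟨r, mem_sdiff.2 ⟨hr, hc⟩⟩
      rw [iota_eval_false, dif_neg Finset.not_nonempty_empty, hFS]
  · -- b = false
    rw [iota_eval_false]
    split
    case isTrue h =>
      -- case C
      set q := mke k F h with hq
      have hqF : q ∈ F := mke_mem k F h
      have hqmin : ∀ r ∈ F, k q ≤ k r := by
        intro r hr; rw [hq]; exact mke_min k F h r hr
      set F3 := (F.erase q) ∪ S.filter (fun r => k r < k q) with hF3
      have hqnF3 : q ∉ F3 := by
        rw [hF3]
        intro hc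
        rcases mem_union.1 hc with hc | hc
        · exact absurd hc (notMem_erase _ _)
        · exact absurd (mem_filter.1 hc).2 (lt_irrefl _)
      have hsd : (S \ F3).Nonempty := ⟨q, mem_sdiff.2 ⟨hF hqF, hqnF3⟩⟩
      rw [iota_eval_true, dif_pos hsd]
      have hmke3 : mke k (S \ F3) hsd = q := by
        apply mke_unique k kinj _ _ q (mem_sdiff.2 ⟨hF hqF, hqnF3⟩)
        intro r hr
        rcases mem_sdiff.1 hr with ⟨hrS, hrF3⟩
        by_contra hlt
        push_neg at hlt
        exact hrF3 (mem_union_right _ (mem_filter.2 ⟨hrS, hlt⟩))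
      rw [hmke3]
      have hfilt : F3.filter (fun r => k q < k r) = F.erase q := by
        rw [hF3, filter_union]
        have h1 : (F.erase q).filter (fun r => k q < k r) = F.erase q := by
          apply filter_true_of_mem
          intro r hr
          have h2 := hqmin r (mem_of_mem_erase hr)
          have h3 : r ≠ q := ne_of_mem_erase hr
          have : k r ≠ k q := fun hc => h3 (kinj _ _ hc)
          omega
        have h2 : (S.filter (fun r => k r < k q)).filter (fun r => k q < k r) = ∅ := by
          rw [filter_eq_empty_iff]
          intro r hr
          have := (mem_filter.1 hr).2
          omega
        rw [h1, h2, union_empty]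
      rw [hfilt, insert_erase hqF]
    case isFalse h =>
      -- case D
      rw [iota_eval_true, dif_neg]
      · have : F = ∅ := Finset.not_nonempty_iff_eq_empty.1 h
        rw [this]
      · rw [sdiff_self]
        exact Finset.not_nonempty_empty

lemma iota_stat (W : B m) (x : Bool × Finset (Fin m)) (hF : x.2 ⊆ aSet W) :
    statA W (iota W x).1 (iota W x).2 = statA W x.1 x.2 := by
  rcases x with ⟨b, F⟩
  simp only at hF
  set k := key W with hk
  set S := aSet W with hS
  have kinj : ∀ a b : Fin m, k a = k b → a = b := fun a b h => key_inj W h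
  have hstatS : ∀ (b' : Bool) (F' : Finset (Fin m)), statA W b' F' =
      if b' = true then F'.card + 1 else mstat k S F' := by
    intro b' F'
    rcases Bool.eq_false_or_eq_true b' with hb | hb <;> subst hb
    · rw [statA]
      simp only [if_true]
    · rw [statA_false_eq]
      simp only [Bool.false_eq_true, if_false]
      rfl
  rcases Bool.eq_false_or_eq_true b with hb | hb <;> subst hb
  · -- b = true : statA = F.card + 1
    rw [iota_eval_true]
    split
    case isTrue h =>
      set p := mke k (S \ F) h with hp
      have hpS : p ∈ S := (mem_sdiff.1 (mke_mem k _ h)).1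
      have hpF : p ∉ F := (mem_sdiff.1 (mke_mem k _ h)).2
      have hpmin : ∀ r ∈ S \ F, k p ≤ k r := by
        intro r hr; rw [hp]; exact mke_min k _ h r hr
      set F2 := insert p (F.filter (fun r => k p < k r)) with hF2
      have hne2 : F2.Nonempty := insert_nonempty _ _
      have hmke2 : mke k F2 hne2 = p := by
        apply mke_unique k kinj _ _ p (mem_insert_self _ _)
        intro r hr
        rcases mem_insert.1 hr with rfl | hr
        · exact le_refl _
        · exact le_of_lt (mem_filter.1 hr).2
      rw [hstatS, hstatS]
      simp only [Bool.false_eq_true, if_false, if_true]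
      rw [mstat, dif_pos hne2, hmke2]
      have hpnf : p ∉ F.filter (fun r => k p < k r) := by
        intro hc; exact absurd (mem_filter.1 hc).2 (lt_irrefl _)
      have hcard2 : F2.card = (F.filter (fun r => k p < k r)).card + 1 := by
        rw [hF2, card_insert_of_notMem hpnf]
      have hdisj : Disjoint (F.filter (fun r => k p < k r)) (S.filter (fun r => k r < k p)) := by
        rw [disjoint_left]
        intro r h1 h2
        have := (mem_filter.1 h1).2
        have := (mem_filter.1 h2).2
        omega
      have hunion : F.filter (fun r => k p < k r) ∪ S.filter (fun r => k r < k p) = F := by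
        ext r
        simp only [mem_union, mem_filter]
        constructor
        · rintro (⟨hr, _⟩ | ⟨hrS, hlt⟩)
          · exact hr
          · by_contra hrF
            have := hpmin r (mem_sdiff.2 ⟨hrS, hrF⟩)
            omega
        · intro hr
          have hrp : r ≠ p := fun hc => hpF (hc ▸ hr)
          have : k r ≠ k p := fun hc => hrp (kinj _ _ hc)
          rcases Nat.lt_or_ge (k p) (k r) with hlt | hge
          · exact Or.inl ⟨hr, hlt⟩
          · exact Or.inr ⟨hF hr, by omega⟩
      have hFcard : F.card = (F.filter (fun r => k p < k r)).card
          + (S.filter (fun r => k r < k p)).card := by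
        rw [← card_union_of_disjoint hdisj, hunion]
      omega
    case isFalse h =>
      have hFS : F = S := by
        apply Subset.antisymm hF
        intro r hr
        by_contra hc
        exact h ⟨r, mem_sdiff.2 ⟨hr, hc⟩⟩
      rw [hstatS, hstatS]
      simp only [Bool.false_eq_true, if_false, if_true]
      rw [mstat, dif_neg Finset.not_nonempty_empty, hFS]
  · -- b = false
    rw [iota_eval_false]
    split
    case isTrue h =>
      set q := mke k F h with hq
      have hqF : q ∈ F := mke_mem k F h
      have hqmin : ∀ r ∈ F, k q ≤ k r := by
        intro r hr; rw [hq]; exact mke_min k F h r hr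
      rw [hstatS, hstatS]
      simp only [Bool.false_eq_true, if_false, if_true]
      rw [mstat, dif_pos h]
      have hdisj : Disjoint (F.erase q) (S.filter (fun r => k r < k q)) := by
        rw [disjoint_left]
        intro r h1 h2
        have h3 := hqmin r (mem_of_mem_erase h1)
        have := (mem_filter.1 h2).2
        omega
      rw [card_union_of_disjoint hdisj, card_erase_of_mem hqF]
      have : 1 ≤ F.card := card_pos.2 h
      rw [← hq]
      omega
    case isFalse h =>
      have hFe : F = ∅ := Finset.not_nonempty_iff_eq_empty.1 h
      rw [hstatS, hstatS]
      simp only [Bool.false_eq_true, if_false, if_true]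
      rw [hFe, mstat, dif_neg Finset.not_nonempty_empty]

/-! ### The involution on tableaux -/

noncomputable def phi (T : B (m+1)) : B (m+1) :=
  dec (del T) (iota (del T) (encP T)).1 (iota (del T) (encP T)).2

lemma phi_del (T : B (m+1)) : del (phi T) = del T := del_dec _ _ _

lemma phi_encP (T : B (m+1)) : encP (phi T) = iota (del T) (encP T) := by
  rw [phi, encP_dec _ _ _ (iota_sub _ _ (encP_sub T))]
  split
  case isTrue h => rfl
  case isFalse h =>
    push_neg at h
    obtain ⟨h1, h2⟩ := h
    have hb : (iota (del T) (encP T)).1 = false := by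
      rcases Bool.eq_false_or_eq_true (iota (del T) (encP T)).1 with h' | h' <;> tauto
    have hF : (iota (del T) (encP T)).2 = ∅ := h2
    rw [← hb, ← hF]

lemma phi_phi (T : B (m+1)) : phi (phi T) = T := by
  conv_lhs => rw [phi, phi_del, phi_encP]
  rw [iota_invol _ _ (encP_sub T)]
  exact dec_encP T

lemma phi_aS (T : B (m+1)) : aS (phi T) = aS T := by
  rw [phi, aS_dec _ _ _ (iota_sub _ _ (encP_sub T)), iota_stat _ _ (encP_sub T)]
  conv_rhs => rw [← dec_encP T]
  rw [aS_dec _ _ _ (encP_sub T)]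

lemma dOne_iff (T : B (m+1)) : dOne T ↔ T.filling (Fin.last m) (Fin.last m) = true := by
  constructor
  · exact fun h => h.2
  · intro h
    exact ⟨(T.support _ _ h).1, h⟩

lemma phi_dOne (T : B (m+1)) : dOne (phi T) ↔ ¬ dOne T := by
  rw [phi, dOne_dec _ _ _ (iota_sub _ _ (encP_sub T)), iota_fst]
  rw [dOne_iff]
  have : (encP T).1 = T.filling (Fin.last m) (Fin.last m) := rfl
  rw [← this]
  rcases Bool.eq_false_or_eq_true (encP T).1 with h | h <;> rw [h] <;> simp

end TB
namespace TB
open Finset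
open scoped Classical
variable {n m : ℕ}

lemma iterdel_dOne : ∀ (t : ℕ) (T : B (m+1+t)) (j : Fin (m+1+t)), (j : ℕ) = m →
    (dOne (iterdel t T) ↔ (T.west j = true ∧ T.filling j j = true)) := by
  intro t
  induction t with
  | zero =>
    intro T j hj
    have : j = Fin.last m := by apply Fin.ext; simp [hj]
    subst this
    exact Iff.rfl
  | succ t ih =>
    intro T j hj
    have hlt : m < m+1+t := by omega
    set j' : Fin (m+1+t) := ⟨m, hlt⟩ with hj'
    have h1 : dOne (iterdel (t+1) T) ↔ ((del T).west j' = true ∧ (del T).filling j' j' = true) :=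
      ih (del T) j' rfl
    have h2 : j'.castSucc = j := by apply Fin.ext; simp [hj, hj']
    rw [h1, del_west, del_fill, h2]

lemma half (m t : ℕ) :
    2 * (univ.filter (fun T : B (m+1+t) => dOne (iterdel t T))).card
      = Fintype.card (B (m+1+t)) := by
  have hfib : ∀ V₁ V₂ : B (m+1), aS V₁ = aS V₂ →
      (univ.filter (fun T : B (m+1+t) => iterdel t T = V₁)).card
        = (univ.filter (fun T : B (m+1+t) => iterdel t T = V₂)).card := by
    intro V₁ V₂ h
    have hmc := mainCount t (m+1) V₁ V₂ h (fun _ => 1)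
    simpa using hmc
  have hgroup : ∀ (Q : B (m+1) → Prop),
      (univ.filter (fun T : B (m+1+t) => Q (iterdel t T))).card
      = ∑ V ∈ univ.filter Q, (univ.filter (fun T : B (m+1+t) => iterdel t T = V)).card := by
    intro Q
    have h0 : ∀ T ∈ univ.filter (fun T : B (m+1+t) => Q (iterdel t T)),
        iterdel t T ∈ univ.filter Q := by
      intro T hT
      rw [mem_filter] at hT ⊢
      exact ⟨mem_univ _, hT.2⟩
    have hsum := Finset.sum_fiberwise_of_maps_to h0 (fun _ => (1:ℕ))
    rw [card_eq_sum_ones, ← hsum]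
    refine sum_congr rfl ?_
    intro V hV
    rw [mem_filter] at hV
    rw [card_eq_sum_ones]
    refine sum_congr ?_ (fun _ _ => rfl)
    ext T
    simp only [mem_filter, mem_univ, true_and]
    constructor
    · rintro ⟨_, h2⟩; exact h2
    · intro h2; exact ⟨by rw [h2]; exact hV.2, h2⟩
  have htot : Fintype.card (B (m+1+t))
      = ∑ V ∈ (univ : Finset (B (m+1))),
          (univ.filter (fun T : B (m+1+t) => iterdel t T = V)).card := by
    have hg := hgroup (fun _ => True)
    simp only [Finset.filter_true] at hg
    rw [← Finset.card_univ]
    convert hg using 2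
  have hsplit : (∑ V ∈ univ.filter dOne,
        (univ.filter (fun T : B (m+1+t) => iterdel t T = V)).card)
      + (∑ V ∈ univ.filter (fun V => ¬ dOne V),
        (univ.filter (fun T : B (m+1+t) => iterdel t T = V)).card)
      = ∑ V ∈ (univ : Finset (B (m+1))),
          (univ.filter (fun T : B (m+1+t) => iterdel t T = V)).card :=
    Finset.sum_filter_add_sum_filter_not (univ : Finset (B (m+1))) dOne
      (fun V => (univ.filter (fun T : B (m+1+t) => iterdel t T = V)).card)
  have hpair : ∑ V ∈ univ.filter dOne,
        (univ.filter (fun T : B (m+1+t) => iterdel t T = V)).card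
      = ∑ V ∈ univ.filter (fun V => ¬ dOne V),
        (univ.filter (fun T : B (m+1+t) => iterdel t T = V)).card := by
    refine Finset.sum_nbij' phi phi ?_ ?_ ?_ ?_ ?_
    · intro V hV
      rw [mem_filter] at hV ⊢
      refine ⟨mem_univ _, ?_⟩
      intro hc
      exact (phi_dOne V).1 hc hV.2
    · intro V hV
      rw [mem_filter] at hV ⊢
      exact ⟨mem_univ _, (phi_dOne V).2 hV.2⟩
    · intro V _; exact phi_phi V
    · intro V _; exact phi_phi V
    · intro V _
      exact hfib V (phi V) (phi_aS V).symm
  rw [hgroup dOne]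
  omega

end TB

/-- The total number of ones on the diagonal over all type-B permutation tableaux
of size `n` equals `(n/2) · |B_n|`; i.e. the expected number of ones on the
diagonal of a uniformly random type-B permutation tableau of size `n` is `n/2`. -/
theorem expected_diagonal_ones (n : ℕ) (hn : 1 ≤ n) :
    (∑ T : TypeBTableau n, (T.numDiagOnes : ℝ)) =
      (n : ℝ) / 2 * (Fintype.card (TypeBTableau n) : ℝ) := by
  classical
  have key : ∀ j : Fin n, 2 * (Finset.univ.filter
      (fun T : TypeBTableau n => T.west j = true ∧ T.filling j j = true)).card
      = Fintype.card (TypeBTableau n) := by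
    intro j
    obtain ⟨mm, tt, hmm, e⟩ : ∃ mm tt, (j : ℕ) = mm ∧ mm+1+tt = n :=
      ⟨(j : ℕ), n - (j : ℕ) - 1, rfl, by have := j.isLt; omega⟩
    subst e
    have hbridge : ∀ T : TypeBTableau (mm+1+tt),
        (T.west j = true ∧ T.filling j j = true) ↔ TB.dOne (TB.iterdel tt T) :=
      fun T => (TB.iterdel_dOne tt T j hmm).symm
    rw [show (Finset.univ.filter
        (fun T : TypeBTableau (mm+1+tt) => T.west j = true ∧ T.filling j j = true))
        = Finset.univ.filter (fun T => TB.dOne (TB.iterdel tt T)) from by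
      ext T
      simp only [Finset.mem_filter]
      rw [hbridge T]]
    exact TB.half mm tt
  have h1 : ∀ T : TypeBTableau n, (T.numDiagOnes : ℝ)
      = ∑ j : Fin n, (if T.west j = true ∧ T.filling j j = true then (1:ℝ) else 0) := by
    intro T
    rw [TypeBTableau.numDiagOnes, Finset.card_filter]
    rw [Nat.cast_sum]
    refine Finset.sum_congr rfl ?_
    intro j _
    split <;> simp
  rw [Finset.sum_congr rfl (fun T _ => h1 T), Finset.sum_comm]
  have h2 : ∀ j : Fin n, (∑ T : TypeBTableau n,
      (if T.west j = true ∧ T.filling j j = true then (1:ℝ) else 0))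
      = (Fintype.card (TypeBTableau n) : ℝ) / 2 := by
    intro j
    rw [Finset.sum_boole]
    have h3 := key j
    have h4 : ((Finset.univ.filter
        (fun T : TypeBTableau n => T.west j = true ∧ T.filling j j = true)).card : ℝ) * 2
        = (Fintype.card (TypeBTableau n) : ℝ) := by
      rw [← h3]; push_cast; ring
    linarith
  rw [Finset.sum_congr rfl (fun j _ => h2 j), Finset.sum_const, Finset.card_univ,
    Fintype.card_fin, nsmul_eq_mul]
  push_cast
  ring
end
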